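/- arXiv:math/0406434 — 9 statements merged into one kernel-verified Lean document; each statement's English description precedes it below -/
import Mathlib

section
/- Let π ∈ H₍₁,₂,₂₎ be primary with N(π) = p a rational prime. If π − 1 ∈ 2(1+i)·H₍₁,₂,₂₎ then p ≡ 1 (mod 4), and if π − (1 + 2v₃) ∈ 2(1+i)·H₍₁,₂,₂₎ then p ≡ 3 (mod 4). -/
open Quaternion

noncomputable section

/-- `v₁ = 1` -/
def v₁ : ℍ[ℝ] := 1

/-- `v₂ = i` -/
def v₂ : ℍ[ℝ] := ⟨0, 1, 0, 0⟩

/-- `v₃ = (1 + i + √2·j)/2` -/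
def v₃ : ℍ[ℝ] := ⟨1/2, 1/2, Real.sqrt 2 / 2, 0⟩

/-- `v₄ = (1 + i + √2·k)/2` -/
def v₄ : ℍ[ℝ] := ⟨1/2, 1/2, 0, Real.sqrt 2 / 2⟩

/-- The quaternion order `H₍₁,₂,₂₎`: the ℤ-span of `{v₁, v₂, v₃, v₄}`. -/
def H122 : Set ℍ[ℝ] :=
  {q | ∃ a b c d : ℤ, q = a • v₁ + b • v₂ + c • v₃ + d • v₄}

/-- Coordinates of a general element of `H122`. -/
lemma H122_coords (a b c d : ℤ) :
    (a • v₁ + b • v₂ + c • v₃ + d • v₄ : ℍ[ℝ]) =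
      ⟨a + c/2 + d/2, b + c/2 + d/2, Real.sqrt 2/2 * c, Real.sqrt 2/2 * d⟩ := by
  have h : ∀ (n : ℤ) (q : ℍ[ℝ]), n • q = (n : ℝ) • q :=
    fun n q => (Int.cast_smul_eq_zsmul ℝ n q).symm
  rw [h, h, h, h]
  ext <;> simp only [Quaternion.re_add, Quaternion.imI_add, Quaternion.imJ_add, Quaternion.imK_add,
    Quaternion.re_smul, Quaternion.imI_smul, Quaternion.imJ_smul, Quaternion.imK_smul] <;>
    simp [v₁, v₂, v₃, v₄] <;> ring

/-- Let `π ∈ H₍₁,₂,₂₎` be primary with norm a rational prime `p`.  If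
`π − 1 ∈ 2(1+i)·H₍₁,₂,₂₎` then `p ≡ 1 (mod 4)`, and if
`π − (1 + 2v₃) ∈ 2(1+i)·H₍₁,₂,₂₎` then `p ≡ 3 (mod 4)`. -/
theorem primary_prime_mod_four (π : ℍ[ℝ]) (hπ : π ∈ H122) (p : ℕ) (hp : p.Prime)
    (hN : π * star π = (p : ℍ[ℝ])) :
    ((∃ h ∈ H122, π - 1 = 2 * (1 + v₂) * h) → p % 4 = 1) ∧
    ((∃ h ∈ H122, π - (1 + 2 * v₃) = 2 * (1 + v₂) * h) → p % 4 = 3) := by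
  have h2r : (2:ℍ[ℝ]).re = 2 := rfl
  have h2i : (2:ℍ[ℝ]).imI = 0 := rfl
  have h2j : (2:ℍ[ℝ]).imJ = 0 := rfl
  have h2k : (2:ℍ[ℝ]).imK = 0 := rfl
  have hs : Real.sqrt 2 * Real.sqrt 2 = 2 := Real.mul_self_sqrt (by norm_num)
  constructor
  · rintro ⟨h, ⟨a, b, c, d, rfl⟩, heq⟩
    rw [H122_coords] at heq
    obtain ⟨X, hX⟩ : ∃ X : ℍ[ℝ], (⟨a + c/2 + d/2, b + c/2 + d/2, Real.sqrt 2/2 * c,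
      Real.sqrt 2/2 * d⟩ : ℍ[ℝ]) = X := ⟨_, rfl⟩
    rw [hX] at heq
    have hπ' := eq_add_of_sub_eq heq
    rw [hπ'] at hN
    have hre := congrArg QuaternionAlgebra.re hN
    simp [h2r, h2i, h2j, h2k, Quaternion.re_mul, Quaternion.re_add,
      Quaternion.re_one, Quaternion.imI_mul, Quaternion.imJ_mul, Quaternion.imK_mul] at hre
    subst hX
    simp [v₂] at hre
    have key : (p:ℝ) = 1 + 4*(((a:ℝ)-b) + ((a:ℝ)-b)^2 + ((a:ℝ)+b+c+d)^2
        + ((c:ℝ)^2+(d:ℝ)^2)) := by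
      linear_combination -hre + 2*((c:ℝ)^2+(d:ℝ)^2) * hs
    have kz : (p:ℤ) = 1 + 4*((a-b) + (a-b)^2 + (a+b+c+d)^2 + (c^2+d^2)) := by
      exact_mod_cast key
    obtain ⟨m, hm⟩ : ∃ m:ℤ, (p:ℤ) = 1+4*m := ⟨_, kz⟩
    omega
  · rintro ⟨h, ⟨a, b, c, d, rfl⟩, heq⟩
    rw [H122_coords] at heq
    obtain ⟨X, hX⟩ : ∃ X : ℍ[ℝ], (⟨a + c/2 + d/2, b + c/2 + d/2, Real.sqrt 2/2 * c,
      Real.sqrt 2/2 * d⟩ : ℍ[ℝ]) = X := ⟨_, rfl⟩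
    rw [hX] at heq
    have hπ' := eq_add_of_sub_eq heq
    rw [hπ'] at hN
    have hre := congrArg QuaternionAlgebra.re hN
    simp [h2r, h2i, h2j, h2k, Quaternion.re_mul, Quaternion.re_add,
      Quaternion.re_one, Quaternion.imI_mul, Quaternion.imJ_mul, Quaternion.imK_mul] at hre
    subst hX
    simp [v₂, v₃] at hre
    have key : (p:ℝ) = 3 + 4*((1+(a:ℝ)-b)^2 + ((a:ℝ)+b+c+d) + ((a:ℝ)+b+c+d)^2
        + ((c:ℝ)-d) + (c:ℝ)^2 + (d:ℝ)^2) := by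
      linear_combination -hre + ((1+(c:ℝ)-d)^2+((c:ℝ)+d)^2) * hs
    have kz : (p:ℤ) = 3 + 4*((1+a-b)^2 + (a+b+c+d) + (a+b+c+d)^2 + (c-d) + c^2 + d^2) := by
      exact_mod_cast key
    obtain ⟨m, hm⟩ : ∃ m:ℤ, (p:ℤ) = 3+4*m := ⟨_, kz⟩
    omega
end
end

section
/- An element π ∈ H₍₁,₂,₂₎ is a prime of H₍₁,₂,₂₎ if and only if N(π) is a rational prime. -/
open Quaternion

noncomputable section

def E (a b c d : ℤ) : ℍ[ℝ] := a • v₁ + b • v₂ + c • v₃ + d • v₄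

lemma mem_H122_iff {q : ℍ[ℝ]} : q ∈ H122 ↔ ∃ a b c d : ℤ, q = E a b c d := Iff.rfl

lemma E_def (a b c d : ℤ) : E a b c d =
    ⟨a + (c+d)/2, b + (c+d)/2, Real.sqrt 2 * c / 2, Real.sqrt 2 * d / 2⟩ := by
  simp only [E]
  ext <;> simp [Quaternion.re_mul, Quaternion.imI_mul, Quaternion.imJ_mul, Quaternion.imK_mul] <;> simp [v₁, v₂, v₃, v₄] <;> push_cast <;> ring

lemma hs2 : Real.sqrt 2 * Real.sqrt 2 = 2 := Real.mul_self_sqrt (by norm_num)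

lemma E_mul (a b c d A B C D : ℤ) : E a b c d * E A B C D =
    E (a*A - b*B - b*C - c*C - d*B - d*C - d*D)
      (a*B + b*A + b*D + c*B + c*D - d*C)
      (a*C - b*D + c*A + c*C + d*B + d*C)
      (a*D + b*C - c*B + d*A + d*C + d*D) := by
  rw [E_def, E_def, E_def]
  ext
  · erw [Quaternion.re_mul]
    push_cast
    linear_combination (-((c:ℝ)*(C:ℝ) + (d:ℝ)*(D:ℝ))/4) * hs2
  · erw [Quaternion.imI_mul]
    push_cast
    linear_combination (((c:ℝ)*(D:ℝ) - (d:ℝ)*(C:ℝ))/4) * hs2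
  · erw [Quaternion.imJ_mul]
    push_cast
    ring
  · erw [Quaternion.imK_mul]
    push_cast
    ring

lemma E_star (a b c d : ℤ) : star (E a b c d) = E (a+c+d) (-b) (-c) (-d) := by
  rw [E_def, E_def]
  ext
  · erw [Quaternion.re_star]; push_cast; ring
  · erw [Quaternion.imI_star]; push_cast; ring
  · erw [Quaternion.imJ_star]; push_cast; ring
  · erw [Quaternion.imK_star]; push_cast; ring

/-- integer norm form -/
def Nz (a b c d : ℤ) : ℤ := a^2+b^2+c^2+d^2+a*c+a*d+b*c+b*d+c*d

lemma normSq_E (a b c d : ℤ) : normSq (E a b c d) = (Nz a b c d : ℝ) := by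
  rw [E_def]; erw [Quaternion.normSq_def']
  simp only [Nz]
  push_cast
  linear_combination (((c:ℝ)^2 + (d:ℝ)^2)/4) * hs2

lemma E_spec (a b c d : ℤ) : a • v₁ + b • v₂ + c • v₃ + d • v₄ = E a b c d := rfl

lemma E_add (a b c d A B C D : ℤ) : E a b c d + E A B C D = E (a+A) (b+B) (c+C) (d+D) := by
  simp only [E, add_zsmul]; abel

lemma E_sub (a b c d A B C D : ℤ) : E a b c d - E A B C D = E (a-A) (b-B) (c-C) (d-D) := by
  simp only [E, sub_zsmul]; abel

lemma intCast_E (n : ℤ) : (n : ℍ[ℝ]) = E n 0 0 0 := by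
  simp [E, v₁]

lemma natCast_E (n : ℕ) : (n : ℍ[ℝ]) = E n 0 0 0 := by
  rw [show ((n : ℍ[ℝ])) = ((n : ℤ) : ℍ[ℝ]) by push_cast; ring]
  exact intCast_E n

lemma HM_mul {x y : ℍ[ℝ]} (hx : x ∈ H122) (hy : y ∈ H122) : x * y ∈ H122 := by
  obtain ⟨a, b, c, d, rfl⟩ := hx
  obtain ⟨A, B, C, D, rfl⟩ := hy
  rw [E_spec, E_spec, E_mul]
  exact ⟨_, _, _, _, rfl⟩

lemma HM_add {x y : ℍ[ℝ]} (hx : x ∈ H122) (hy : y ∈ H122) : x + y ∈ H122 := by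
  obtain ⟨a, b, c, d, rfl⟩ := hx
  obtain ⟨A, B, C, D, rfl⟩ := hy
  rw [E_spec, E_spec, E_add]
  exact ⟨_, _, _, _, rfl⟩

lemma HM_sub {x y : ℍ[ℝ]} (hx : x ∈ H122) (hy : y ∈ H122) : x - y ∈ H122 := by
  obtain ⟨a, b, c, d, rfl⟩ := hx
  obtain ⟨A, B, C, D, rfl⟩ := hy
  rw [E_spec, E_spec, E_sub]
  exact ⟨_, _, _, _, rfl⟩

lemma HM_star {x : ℍ[ℝ]} (hx : x ∈ H122) : star x ∈ H122 := by
  obtain ⟨a, b, c, d, rfl⟩ := hx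
  rw [E_spec, E_star]
  exact ⟨_, _, _, _, rfl⟩

lemma HM_natCast (n : ℕ) : (n : ℍ[ℝ]) ∈ H122 := ⟨n, 0, 0, 0, natCast_E n⟩

lemma HM_one : (1 : ℍ[ℝ]) ∈ H122 := by simpa using HM_natCast 1

lemma normSq_natval {x : ℍ[ℝ]} (hx : x ∈ H122) : ∃ n : ℕ, normSq x = (n : ℝ) := by
  obtain ⟨a, b, c, d, rfl⟩ := hx
  rw [E_spec, normSq_E]
  have h0 : (0:ℝ) ≤ ((Nz a b c d : ℤ) : ℝ) := by rw [← normSq_E]; exact normSq_nonneg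
  have h0' : (0:ℤ) ≤ Nz a b c d := by exact_mod_cast h0
  exact ⟨(Nz a b c d).toNat, by exact_mod_cast congrArg (fun z : ℤ => (z:ℝ)) (Int.toNat_of_nonneg h0').symm⟩

/-- A unit of `H₍₁,₂,₂₎`: an element with a two-sided inverse in `H₍₁,₂,₂₎`. -/
def IsUnitH (u : ℍ[ℝ]) : Prop :=
  u ∈ H122 ∧ ∃ v ∈ H122, u * v = 1 ∧ v * u = 1

lemma isUnitH_iff {x : ℍ[ℝ]} (hx : x ∈ H122) : IsUnitH x ↔ normSq x = 1 := by
  constructor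
  · rintro ⟨-, v, hv, h1, -⟩
    obtain ⟨m, hm⟩ := normSq_natval hx
    obtain ⟨n, hn⟩ := normSq_natval hv
    have : normSq x * normSq v = 1 := by
      rw [← map_mul, h1, map_one]
    rw [hm, hn] at this
    have hmn : m * n = 1 := by exact_mod_cast this
    have : m = 1 := Nat.eq_one_of_mul_eq_one_right hmn
    rw [hm, this, Nat.cast_one]
  · intro h1
    refine ⟨hx, star x, HM_star hx, ?_, ?_⟩
    · rw [Quaternion.self_mul_star, h1]; norm_num
    · rw [Quaternion.star_mul_self, h1]; norm_num

lemma round_lemma (ξ : ℍ[ℝ]) : ∃ lam ∈ H122, normSq (ξ - lam) ≤ 3/4 := by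
  set s := Real.sqrt 2 with hs
  have hspos : 0 < s := Real.sqrt_pos.mpr (by norm_num)
  -- choose c, d
  set c : ℤ := round (s * ξ.imJ) with hc
  set d : ℤ := round (s * ξ.imK) with hd
  set a : ℤ := round (ξ.re - ((c:ℝ)+(d:ℝ))/2) with ha
  set b : ℤ := round (ξ.imI - ((c:ℝ)+(d:ℝ))/2) with hb
  refine ⟨E a b c d, ⟨a, b, c, d, (E_spec a b c d).symm⟩, ?_⟩
  rw [Quaternion.normSq_def']
  have hc1 : |s * ξ.imJ - (c:ℝ)| ≤ 1/2 := abs_sub_round _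
  have hd1 : |s * ξ.imK - (d:ℝ)| ≤ 1/2 := abs_sub_round _
  have ha1 : |ξ.re - ((c:ℝ)+(d:ℝ))/2 - (a:ℝ)| ≤ 1/2 := abs_sub_round _
  have hb1 : |ξ.imI - ((c:ℝ)+(d:ℝ))/2 - (b:ℝ)| ≤ 1/2 := abs_sub_round _
  have sq_le : ∀ t : ℝ, |t| ≤ 1/2 → t^2 ≤ 1/4 := by
    intro t ht
    nlinarith [abs_nonneg t, sq_abs t]
  have hre : (ξ - E a b c d).re = ξ.re - ((c:ℝ)+(d:ℝ))/2 - (a:ℝ) := by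
    rw [E_def]; erw [Quaternion.re_sub]; simp; ring
  have him : (ξ - E a b c d).imI = ξ.imI - ((c:ℝ)+(d:ℝ))/2 - (b:ℝ) := by
    rw [E_def]; erw [Quaternion.imI_sub]; simp; ring
  have hj : (ξ - E a b c d).imJ = ξ.imJ - s * (c:ℝ) / 2 := by
    rw [E_def]; erw [Quaternion.imJ_sub]
  have hk : (ξ - E a b c d).imK = ξ.imK - s * (d:ℝ) / 2 := by
    rw [E_def]; erw [Quaternion.imK_sub]
  have hss : s * s = 2 := hs2
  have hj2 : (ξ.imJ - s * (c:ℝ) / 2)^2 ≤ 1/8 := by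
    have h2 : (s * ξ.imJ - (c:ℝ))^2 ≤ 1/4 := sq_le _ hc1
    have hid : 2*(ξ.imJ - s * (c:ℝ)/2)^2 = (s * ξ.imJ - (c:ℝ))^2 := by
      linear_combination ((c:ℝ)^2/2 - ξ.imJ^2) * hss
    linarith
  have hk2 : (ξ.imK - s * (d:ℝ) / 2)^2 ≤ 1/8 := by
    have h2 : (s * ξ.imK - (d:ℝ))^2 ≤ 1/4 := sq_le _ hd1
    have hid : 2*(ξ.imK - s * (d:ℝ)/2)^2 = (s * ξ.imK - (d:ℝ))^2 := by
      linear_combination ((d:ℝ)^2/2 - ξ.imK^2) * hss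
    linarith
  rw [hre, him, hj, hk]
  have := sq_le _ ha1
  have := sq_le _ hb1
  linarith

lemma division {x y : ℍ[ℝ]} (hy0 : y ≠ 0) :
    ∃ q ∈ H122, normSq (x - q * y) < normSq y := by
  obtain ⟨lam, hlam, hle⟩ := round_lemma (x * y⁻¹)
  refine ⟨lam, hlam, ?_⟩
  have hxy : x - lam * y = (x * y⁻¹ - lam) * y := by
    rw [sub_mul, inv_mul_cancel_right₀ hy0]
  rw [hxy, map_mul]
  have hypos : 0 < normSq y := by
    rcases lt_or_eq_of_le (normSq_nonneg (a := y)) with h | h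
    · exact h
    · exact absurd (normSq_eq_zero.mp h.symm) hy0
  calc normSq (x * y⁻¹ - lam) * normSq y ≤ 3/4 * normSq y := by
        exact mul_le_mul_of_nonneg_right hle (le_of_lt hypos)
    _ < normSq y := by nlinarith

lemma HM_zero : (0:ℍ[ℝ]) ∈ H122 := ⟨0, 0, 0, 0, by simp [E]⟩

lemma two_sq_conv {x y : ℤ} (h : Even (x - y)) : ∃ z w : ℤ, x^2 + y^2 = 2*z^2 + 2*w^2 := by
  obtain ⟨t, ht⟩ := h
  have hx : x = y + 2*t := by linarith
  subst hx
  exact ⟨y + t, t, by ring⟩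

lemma sum_sq_1122 (n : ℕ) : ∃ a b z w : ℤ, (n:ℤ) = a^2+b^2+2*z^2+2*w^2 := by
  obtain ⟨a, b, c, d, habcd⟩ := Nat.sum_four_squares n
  have h : ((a:ℤ))^2 + (b:ℤ)^2 + (c:ℤ)^2 + (d:ℤ)^2 = (n:ℤ) := by exact_mod_cast habcd
  rcases Int.even_or_odd ((a:ℤ) - b) with hab | hab
  · obtain ⟨z, w, hz⟩ := two_sq_conv hab
    exact ⟨c, d, z, w, by linarith⟩
  rcases Int.even_or_odd ((a:ℤ) - c) with hac | hac
  · obtain ⟨z, w, hz⟩ := two_sq_conv hac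
    exact ⟨b, d, z, w, by linarith⟩
  · have h1 : Even (((a:ℤ) - b) - ((a:ℤ) - c)) := hab.sub_odd hac
    have hbc : Even ((b:ℤ) - c) := by
      obtain ⟨t, ht⟩ := h1
      exact ⟨-t, by linarith⟩
    obtain ⟨z, w, hz⟩ := two_sq_conv hbc
    exact ⟨a, d, z, w, by linarith⟩

lemma exists_normSq (n : ℕ) : ∃ x ∈ H122, normSq x = (n:ℝ) := by
  obtain ⟨a, b, z, w, h⟩ := sum_sq_1122 n
  refine ⟨E (a-z-w) (b-z-w) (2*z) (2*w), ⟨_, _, _, _, rfl⟩, ?_⟩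
  rw [normSq_E]
  have hNz : Nz (a-z-w) (b-z-w) (2*z) (2*w) = (n:ℤ) := by
    simp only [Nz]; linear_combination -h
  rw [hNz]
  norm_cast

lemma mul_star_iff (x : ℍ[ℝ]) (n : ℕ) :
    x * star x = (n:ℍ[ℝ]) ↔ normSq x = (n:ℝ) := by
  rw [Quaternion.self_mul_star, ← Quaternion.coe_natCast, Quaternion.coe_inj]

/-- A prime of `H₍₁,₂,₂₎`: a nonzero nonunit such that in any factorization within
`H₍₁,₂,₂₎` one of the factors is a unit. -/
def IsPrimeH (q : ℍ[ℝ]) : Prop :=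
  q ∈ H122 ∧ q ≠ 0 ∧ ¬ IsUnitH q ∧
    ∀ a ∈ H122, ∀ b ∈ H122, q = a * b → IsUnitH a ∨ IsUnitH b

lemma no_g_mul_p {g : ℍ[ℝ]} (hg : g ∈ H122) {p : ℕ} (pp : p.Prime)
    (hfac : ∀ a ∈ H122, ∀ b ∈ H122, g * (p:ℍ[ℝ]) = a * b → IsUnitH a ∨ IsUnitH b) :
    False := by
  obtain ⟨x, hxH, hx⟩ := exists_normSq p
  have hpx : (p:ℍ[ℝ]) = x * star x := ((mul_star_iff x p).mpr hx).symm
  rcases hfac (g*x) (HM_mul hg hxH) (star x) (HM_star hxH) (by rw [hpx, mul_assoc]) with h | h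
  · have h1 : normSq (g*x) = 1 := (isUnitH_iff (HM_mul hg hxH)).mp h
    obtain ⟨m, hm⟩ := normSq_natval hg
    rw [map_mul, hm, hx] at h1
    have : m * p = 1 := by exact_mod_cast h1
    exact pp.ne_one (Nat.eq_one_of_mul_eq_one_left this)
  · have h1 : normSq (star x) = 1 := (isUnitH_iff (HM_star hxH)).mp h
    rw [Quaternion.normSq_star, hx] at h1
    exact pp.ne_one (by exact_mod_cast h1)

/-- An element `π ∈ H₍₁,₂,₂₎` is a prime of `H₍₁,₂,₂₎` iff its norm is a rational prime. -/
theorem isPrimeH_iff_norm_prime (π : ℍ[ℝ]) (hπ : π ∈ H122) :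
    IsPrimeH π ↔ ∃ p : ℕ, p.Prime ∧ π * star π = (p : ℍ[ℝ]) := by
  constructor
  · rintro ⟨-, hne, hnu, hfac⟩
    obtain ⟨n, hn⟩ := normSq_natval hπ
    have hn0 : n ≠ 0 := by
      intro h
      rw [h, Nat.cast_zero] at hn
      exact hne (normSq_eq_zero.mp hn)
    have hn1 : n ≠ 1 := by
      intro h
      exact hnu ((isUnitH_iff hπ).mpr (by rw [hn, h, Nat.cast_one]))
    obtain ⟨p, pp, hpn⟩ := Nat.exists_prime_and_dvd hn1
    suffices hnp : n = p by
      exact ⟨p, pp, (mul_star_iff π p).mpr (by rw [hn, hnp])⟩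
    have hcomm : ∀ y : ℍ[ℝ], y * (p:ℍ[ℝ]) = (p:ℍ[ℝ]) * y := fun y => by
      rw [← Quaternion.coe_natCast, Quaternion.coe_commutes]
    set Iset : Set ℕ :=
      {m | ∃ μ ∈ H122, ∃ ν ∈ H122,
        μ * π + ν * (p:ℍ[ℝ]) ≠ 0 ∧ normSq (μ * π + ν * (p:ℍ[ℝ])) = (m:ℝ)} with hIset
    have hp0 : (p:ℍ[ℝ]) ≠ 0 := by
      intro h
      have h2 := congrArg normSq h
      rw [Quaternion.normSq_natCast, map_zero] at h2
      have h3 : (p:ℝ) = 0 := by nlinarith [h2]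
      exact pp.ne_zero (by exact_mod_cast h3)
    have hpp : (p*p : ℕ) ∈ Iset := by
      refine ⟨0, HM_zero, 1, HM_one, ?_, ?_⟩ <;> rw [zero_mul, one_mul, zero_add]
      · exact hp0
      · rw [Quaternion.normSq_natCast]; push_cast; ring
    obtain ⟨μ₀, hμ₀, ν₀, hν₀, hδ0, hδn⟩ := Nat.sInf_mem (⟨p*p, hpp⟩ : Iset.Nonempty)
    set m₀ := sInf Iset with hm₀def
    set δ := μ₀ * π + ν₀ * (p:ℍ[ℝ]) with hδdef
    have hδH : δ ∈ H122 := HM_add (HM_mul hμ₀ hπ) (HM_mul hν₀ (HM_natCast p))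
    have hdvd : ∀ μ ∈ H122, ∀ ν ∈ H122, ∃ q ∈ H122, μ * π + ν * (p:ℍ[ℝ]) = q * δ := by
      intro μ hμ ν hν
      obtain ⟨q, hq, hlt⟩ := division (x := μ * π + ν * (p:ℍ[ℝ])) (hy0 := hδ0)
      refine ⟨q, hq, ?_⟩
      by_contra hne'
      have hr0 : μ * π + ν * (p:ℍ[ℝ]) - q * δ ≠ 0 := sub_ne_zero.mpr hne'
      have hrI : μ * π + ν * (p:ℍ[ℝ]) - q * δ
          = (μ - q * μ₀) * π + (ν - q * ν₀) * (p:ℍ[ℝ]) := by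
        rw [hδdef]; noncomm_ring
      have hrH : μ * π + ν * (p:ℍ[ℝ]) - q * δ ∈ H122 :=
        HM_sub (HM_add (HM_mul hμ hπ) (HM_mul hν (HM_natCast p))) (HM_mul hq hδH)
      obtain ⟨m', hm'⟩ := normSq_natval hrH
      have hmem : m' ∈ Iset := by
        refine ⟨μ - q * μ₀, HM_sub hμ (HM_mul hq hμ₀), ν - q * ν₀,
          HM_sub hν (HM_mul hq hν₀), ?_, ?_⟩
        · rw [← hrI]; exact hr0
        · rw [← hrI]; exact hm'
      have hle := Nat.sInf_le hmem
      rw [hm', hδn] at hlt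
      have : m' < m₀ := by exact_mod_cast hlt
      omega
    obtain ⟨α, hα, hαπ⟩ := hdvd 1 HM_one 0 HM_zero
    rw [one_mul, zero_mul, add_zero] at hαπ
    obtain ⟨β, hβ, hβp⟩ := hdvd 0 HM_zero 1 HM_one
    rw [zero_mul, one_mul, zero_add] at hβp
    rcases hfac α hα δ hδH hαπ with hu | hu
    · have hα1 : normSq α = 1 := (isUnitH_iff hα).mp hu
      have hδn' : normSq δ = (n:ℝ) := by
        have h4 := congrArg normSq hαπ
        rw [map_mul, hα1, one_mul] at h4
        rw [← h4, hn]
      obtain ⟨mβ, hmβ⟩ := normSq_natval hβ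
      have hp2 : (p:ℝ)^2 = (mβ:ℝ) * (n:ℝ) := by
        have h5 := congrArg normSq hβp
        rw [map_mul, hmβ, hδn', Quaternion.normSq_natCast] at h5
        exact h5
      have hp2' : p^2 = mβ * n := by exact_mod_cast hp2
      have hdvdn : n ∣ p^2 := Dvd.intro_left mβ hp2'.symm
      obtain ⟨e, he, hne'⟩ := (Nat.dvd_prime_pow pp).mp hdvdn
      interval_cases e
      · exact absurd hne' (by simpa using hn1)
      · simpa using hne'
      · exfalso
        have hmβ1 : mβ = 1 := by
          have h6 : mβ * p^2 = 1 * p^2 := by rw [one_mul, ← hne', ← hp2', hne']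
          exact Nat.eq_of_mul_eq_mul_right (pow_pos pp.pos 2) h6
        have hβ1 : normSq β = 1 := by rw [hmβ, hmβ1, Nat.cast_one]
        have hβinv : star β * β = 1 := by
          rw [Quaternion.star_mul_self, hβ1, Quaternion.coe_one]
        have hδp : δ = star β * (p:ℍ[ℝ]) := by
          rw [hβp, ← mul_assoc, hβinv, one_mul]
        have hπp : π = (α * star β) * (p:ℍ[ℝ]) := by
          rw [hαπ, hδp, mul_assoc]
        exact no_g_mul_p (HM_mul hα (HM_star hβ)) pp
          (fun a ha b hb h => hfac a ha b hb (hπp.trans h))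
    · exfalso
      have hδ1 : normSq δ = 1 := (isUnitH_iff hδH).mp hu
      have hδinv : star δ * δ = 1 := by
        rw [Quaternion.star_mul_self, hδ1, Quaternion.coe_one]
      obtain ⟨k, hk⟩ := hpn
      have h2 : π * star π = ((n:ℕ):ℍ[ℝ]) := (mul_star_iff π n).mpr hn
      have h1 : (star δ * μ₀) * π + (star δ * ν₀) * (p:ℍ[ℝ]) = 1 := by
        rw [← hδinv, hδdef]; noncomm_ring
      set γ := (star δ * μ₀) * ((k:ℕ):ℍ[ℝ]) + (star δ * ν₀) * star π with hγdef
      have hγH : γ ∈ H122 :=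
        HM_add (HM_mul (HM_mul (HM_star hδH) hμ₀) (HM_natCast k))
          (HM_mul (HM_mul (HM_star hδH) hν₀) (HM_star hπ))
      have hnpk : ((n:ℕ):ℍ[ℝ]) = ((k:ℕ):ℍ[ℝ]) * ((p:ℕ):ℍ[ℝ]) := by
        rw [hk]; push_cast; rw [(Nat.cast_commute p ((k:ℕ):ℍ[ℝ])).eq]
      have hstarπ : star π = γ * (p:ℍ[ℝ]) := by
        calc star π = ((star δ * μ₀) * π + (star δ * ν₀) * (p:ℍ[ℝ])) * star π := by
              rw [h1, one_mul]
        _ = (star δ * μ₀) * (π * star π) + ((star δ * ν₀) * star π) * (p:ℍ[ℝ]) := by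
              simp only [add_mul, mul_assoc, ← hcomm (star π)]
        _ = (star δ * μ₀) * (((k:ℕ):ℍ[ℝ]) * ((p:ℕ):ℍ[ℝ]))
              + ((star δ * ν₀) * star π) * (p:ℍ[ℝ]) := by rw [h2, hnpk]
        _ = γ * (p:ℍ[ℝ]) := by rw [hγdef]; noncomm_ring
      have hπeq : π = star γ * (p:ℍ[ℝ]) := by
        conv_lhs => rw [← star_star π]
        rw [hstarπ, star_mul, star_natCast, ← hcomm (star γ)]
      exact no_g_mul_p (HM_star hγH) pp
        (fun a ha b hb h => hfac a ha b hb (hπeq.trans h))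
  · rintro ⟨p, pp, hmul⟩
    have hnorm : normSq π = (p:ℝ) := (mul_star_iff π p).mp hmul
    refine ⟨hπ, ?_, ?_, ?_⟩
    · intro h0
      rw [h0, map_zero] at hnorm
      exact pp.ne_zero (by exact_mod_cast hnorm.symm)
    · intro hu
      rw [isUnitH_iff hπ, hnorm] at hu
      exact pp.ne_one (by exact_mod_cast hu)
    · intro a ha b hb hab
      obtain ⟨m, hm⟩ := normSq_natval ha
      obtain ⟨k, hk⟩ := normSq_natval hb
      have hmk : m * k = p := by
        have h7 := congrArg normSq hab
        rw [map_mul, hm, hk, hnorm] at h7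
        exact_mod_cast h7.symm
      rcases (Nat.Prime.eq_one_or_self_of_dvd pp m ⟨k, hmk.symm⟩) with h | h
      · left
        rw [isUnitH_iff ha, hm, h, Nat.cast_one]
      · right
        have hk1 : k = 1 := by
          rw [h] at hmk
          exact Nat.eq_of_mul_eq_mul_left pp.pos (by rw [hmk, mul_one])
        rw [isUnitH_iff hb, hk, hk1, Nat.cast_one]
end
end

section
/- For every rational prime p, the element p·1 of H₍₁,₂,₂₎ is not a prime of H₍₁,₂,₂₎; that is, there exist a, b ∈ H₍₁,₂,₂₎, neither of which is a unit of H₍₁,₂,₂₎, with p = a·b. -/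
open Quaternion

noncomputable section

lemma span_eq (a b c d : ℤ) :
    (a : ℤ) • v₁ + b • v₂ + c • v₃ + d • v₄ =
      (⟨(a : ℝ) + ((c : ℝ) + d) / 2, (b : ℝ) + ((c : ℝ) + d) / 2,
        (c : ℝ) * Real.sqrt 2 / 2, (d : ℝ) * Real.sqrt 2 / 2⟩ : ℍ[ℝ]) := by
  ext <;>
    simp only [Quaternion.re_add, Quaternion.imI_add, Quaternion.imJ_add, Quaternion.imK_add,
      Quaternion.re_smul, Quaternion.imI_smul, Quaternion.imJ_smul, Quaternion.imK_smul] <;>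
    simp [v₁, v₂, v₃, v₄, zsmul_eq_mul] <;> ring

lemma normSq_span (a b c d : ℤ) :
    normSq ((a : ℤ) • v₁ + b • v₂ + c • v₃ + d • v₄) =
      ((a ^ 2 + b ^ 2 + (a + b) * (c + d) + c ^ 2 + d ^ 2 + c * d : ℤ) : ℝ) := by
  erw [span_eq, normSq_def']
  have h2 : Real.sqrt 2 ^ 2 = 2 := Real.sq_sqrt (by norm_num)
  push_cast
  linear_combination (((c : ℝ) ^ 2 + (d : ℝ) ^ 2) / 4) * h2

lemma normSq_int_of_mem {q : ℍ[ℝ]} (hq : q ∈ H122) : ∃ n : ℤ, normSq q = (n : ℝ) := by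
  obtain ⟨a, b, c, d, rfl⟩ := hq
  exact ⟨_, normSq_span a b c d⟩

lemma star_span (a b c d : ℤ) :
    star ((a : ℤ) • v₁ + b • v₂ + c • v₃ + d • v₄) =
      ((a + c + d : ℤ) • v₁ + (-b : ℤ) • v₂ + (-c : ℤ) • v₃ + (-d : ℤ) • v₄) := by
  rw [span_eq, span_eq]
  erw [QuaternionAlgebra.star_mk]
  ext <;> simp <;> ring

lemma not_isUnitH_of_normSq {u : ℍ[ℝ]} {p : ℕ} (hp : p.Prime)
    (hn : normSq u = (p : ℝ)) : ¬ IsUnitH u := by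
  rintro ⟨-, v, hv, huv, -⟩
  obtain ⟨n, hn'⟩ := normSq_int_of_mem hv
  have hmul : normSq u * normSq v = 1 := by
    rw [← map_mul, huv, map_one]
  rw [hn, hn'] at hmul
  have hz : (p : ℤ) * n = 1 := by exact_mod_cast hmul
  have : (p : ℤ) = 1 := Int.eq_one_of_mul_eq_one_right (by positivity) hz
  have : p = 1 := by exact_mod_cast this
  exact hp.one_lt.ne' this

/-- No rational prime `p` is a prime of `H₍₁,₂,₂₎`: there exist non-units
`a, b ∈ H₍₁,₂,₂₎` with `p = a·b`. -/
theorem rat_prime_not_primeH (p : ℕ) (hp : p.Prime) :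
    ∃ a ∈ H122, ∃ b ∈ H122, ¬ IsUnitH a ∧ ¬ IsUnitH b ∧ (p : ℍ[ℝ]) = a * b := by
  obtain ⟨w, x, y, z, h4p⟩ := Nat.sum_four_squares (4 * p)
  -- all of w, x, y, z have the same parity
  have sqm : ∀ n : ℕ, n ^ 2 % 4 = n % 2 := by
    intro n
    rcases Nat.even_or_odd n with ⟨m, rfl⟩ | ⟨m, rfl⟩ <;> ring_nf <;> omega
  have hpar : w % 2 = y % 2 ∧ x % 2 = y % 2 ∧ z % 2 = y % 2 := by
    have hw := sqm w; have hx := sqm x; have hy := sqm y; have hz := sqm z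
    omega
  -- integer coefficients
  obtain ⟨A, hA⟩ : ∃ A : ℤ, 2 * A + (y : ℤ) = w := ⟨((w : ℤ) - y) / 2, by omega⟩
  obtain ⟨B, hB⟩ : ∃ B : ℤ, 2 * B + (y : ℤ) = x := ⟨((x : ℤ) - y) / 2, by omega⟩
  obtain ⟨c, hc⟩ : ∃ c : ℤ, 2 * c = (y : ℤ) + z := ⟨((y : ℤ) + z) / 2, by omega⟩
  obtain ⟨d, hd⟩ : ∃ d : ℤ, 2 * d = (y : ℤ) - z := ⟨((y : ℤ) - z) / 2, by omega⟩
  set q : ℍ[ℝ] := (A : ℤ) • v₁ + B • v₂ + c • v₃ + d • v₄ with hq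
  have hqmem : q ∈ H122 := ⟨A, B, c, d, rfl⟩
  have hqstarmem : star q ∈ H122 := by
    rw [hq, star_span]
    exact ⟨_, _, _, _, rfl⟩
  -- normSq q = p
  have hnorm : normSq q = (p : ℝ) := by
    erw [hq, span_eq, normSq_def']
    have h2 : Real.sqrt 2 ^ 2 = 2 := Real.sq_sqrt (by norm_num)
    have e1 : 2 * (A : ℝ) + (y : ℝ) = (w : ℝ) := by exact_mod_cast congrArg (Int.cast : ℤ → ℝ) hA
    have e2 : 2 * (B : ℝ) + (y : ℝ) = (x : ℝ) := by exact_mod_cast congrArg (Int.cast : ℤ → ℝ) hB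
    have e3 : 2 * (c : ℝ) = (y : ℝ) + (z : ℝ) := by exact_mod_cast congrArg (Int.cast : ℤ → ℝ) hc
    have e4 : 2 * (d : ℝ) = (y : ℝ) - (z : ℝ) := by exact_mod_cast congrArg (Int.cast : ℤ → ℝ) hd
    have e5 : (w : ℝ) ^ 2 + (x : ℝ) ^ 2 + (y : ℝ) ^ 2 + (z : ℝ) ^ 2 = 4 * (p : ℝ) := by
      exact_mod_cast congrArg (Nat.cast : ℕ → ℝ) h4p
    have hA' : (A : ℝ) = ((w : ℝ) - y) / 2 := by linarith
    have hB' : (B : ℝ) = ((x : ℝ) - y) / 2 := by linarith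
    have hc' : (c : ℝ) = ((y : ℝ) + z) / 2 := by linarith
    have hd' : (d : ℝ) = ((y : ℝ) - z) / 2 := by linarith
    rw [hA', hB', hc', hd']
    linear_combination ((((y : ℝ) + z) / 2) ^ 2 + (((y : ℝ) - z) / 2) ^ 2) / 4 * h2 +
      (1 / 4) * e5
  refine ⟨q, hqmem, star q, hqstarmem, not_isUnitH_of_normSq hp hnorm,
    not_isUnitH_of_normSq hp (by rw [normSq_star]; exact hnorm), ?_⟩
  rw [self_mul_star, hnorm]
  push_cast
  rfl
end
end

section
/- Let m be an odd positive integer. There exists a surjective ring homomorphism τ from H₍₁,₂,₂₎ onto the ring M₂(ℤ/mℤ) of 2×2 matrices over ℤ/mℤ such that: (1) for g ∈ H₍₁,₂,₂₎, τ(g) = 0 if and only if g = m·h for some h ∈ H₍₁,₂,₂₎; and (2) for every g ∈ H₍₁,₂,₂₎ and every integer k with N(g) = k, det(τ(g)) equals the residue of k modulo m. In particular τ induces a ring isomorphism of H₍₁,₂,₂₎ modulo m with M₂(ℤ/mℤ) carrying the quaternion norm to the determinant. -/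
open Quaternion

noncomputable section

/- ### Auxiliary definitions and lemmas -/

def combo (a b c d : ℤ) : ℍ[ℝ] := a • v₁ + b • v₂ + c • v₃ + d • v₄

lemma combo_re (a b c d : ℤ) : (combo a b c d).re = a + c/2 + d/2 := by
  simp [combo]
  simp [v₁, v₂, v₃, v₄, zsmul_eq_mul]; ring

lemma combo_imI (a b c d : ℤ) : (combo a b c d).imI = b + c/2 + d/2 := by
  simp [combo]
  simp [v₁, v₂, v₃, v₄, zsmul_eq_mul]; ring

lemma combo_imJ (a b c d : ℤ) : (combo a b c d).imJ = c * (Real.sqrt 2 / 2) := by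
  simp [combo]
  simp [v₁, v₂, v₃, v₄, zsmul_eq_mul]

lemma combo_imK (a b c d : ℤ) : (combo a b c d).imK = d * (Real.sqrt 2 / 2) := by
  simp [combo]
  simp [v₁, v₂, v₃, v₄, zsmul_eq_mul]

def az (q : ℍ[ℝ]) : ℤ :=
  round (q.re - (Real.sqrt 2 * q.imJ + Real.sqrt 2 * q.imK)/2)
def bz (q : ℍ[ℝ]) : ℤ :=
  round (q.imI - (Real.sqrt 2 * q.imJ + Real.sqrt 2 * q.imK)/2)
def cz (q : ℍ[ℝ]) : ℤ := round (Real.sqrt 2 * q.imJ)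
def dz (q : ℍ[ℝ]) : ℤ := round (Real.sqrt 2 * q.imK)

lemma az_combo (a b c d : ℤ) : az (combo a b c d) = a := by
  rw [az, combo_re, combo_imJ, combo_imK]
  rw [show ((a:ℝ) + c/2 + d/2 -
      (Real.sqrt 2 * (c * (Real.sqrt 2/2)) + Real.sqrt 2 * (d * (Real.sqrt 2/2)))/2) = (a:ℝ) by
    linear_combination (-(c:ℝ)/4 - (d:ℝ)/4) * hs2]
  exact round_intCast a

lemma bz_combo (a b c d : ℤ) : bz (combo a b c d) = b := by
  rw [bz, combo_imI, combo_imJ, combo_imK]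
  rw [show ((b:ℝ) + c/2 + d/2 -
      (Real.sqrt 2 * (c * (Real.sqrt 2/2)) + Real.sqrt 2 * (d * (Real.sqrt 2/2)))/2) = (b:ℝ) by
    linear_combination (-(c:ℝ)/4 - (d:ℝ)/4) * hs2]
  exact round_intCast b

lemma cz_combo (a b c d : ℤ) : cz (combo a b c d) = c := by
  rw [cz, combo_imJ]
  rw [show (Real.sqrt 2 * (c * (Real.sqrt 2/2))) = (c:ℝ) by
    linear_combination ((c:ℝ)/2) * hs2]
  exact round_intCast c

lemma dz_combo (a b c d : ℤ) : dz (combo a b c d) = d := by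
  rw [dz, combo_imK]
  rw [show (Real.sqrt 2 * (d * (Real.sqrt 2/2))) = (d:ℝ) by
    linear_combination ((d:ℝ)/2) * hs2]
  exact round_intCast d

lemma combo_mem (a b c d : ℤ) : combo a b c d ∈ H122 := ⟨a, b, c, d, rfl⟩

lemma combo_add (a b c d a' b' c' d' : ℤ) :
    combo a b c d + combo a' b' c' d' = combo (a+a') (b+b') (c+c') (d+d') := by
  simp only [combo, add_smul]; abel

lemma combo_one : combo 1 0 0 0 = 1 := by
  simp [combo, v₁]

lemma combo_mul (a b c d a' b' c' d' : ℤ) :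
    combo a b c d * combo a' b' c' d' =
      combo (a*a' - b*b' - b*c' - c*c' - d*b' - d*c' - d*d')
            (a*b' + b*a' + b*d' + c*b' + c*d' - d*c')
            (a*c' + c*a' + c*c' - b*d' + d*b' + d*c')
            (a*d' + b*c' - c*b' + d*a' + d*c' + d*d') := by
  apply QuaternionAlgebra.ext
  · rw [Quaternion.re_mul, combo_re, combo_re, combo_imI, combo_imI, combo_imJ, combo_imJ,
        combo_imK, combo_imK, combo_re]
    push_cast
    linear_combination ((-1/4)*(c:ℝ)*(c':ℝ) + (-1/4)*(d:ℝ)*(d':ℝ)) * hs2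
  · rw [Quaternion.imI_mul, combo_re, combo_imI, combo_imI, combo_imJ, combo_imJ,
        combo_imK, combo_imK, combo_re, combo_imI]
    push_cast
    linear_combination ((1/4)*(c:ℝ)*(d':ℝ) + (-1/4)*(d:ℝ)*(c':ℝ)) * hs2
  · rw [Quaternion.imJ_mul, combo_re, combo_imI, combo_imI, combo_imJ, combo_imJ,
        combo_imK, combo_imK, combo_re, combo_imJ]
    push_cast
    ring
  · rw [Quaternion.imK_mul, combo_re, combo_imI, combo_imI, combo_imJ, combo_imJ,
        combo_imK, combo_imK, combo_re, combo_imK]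
    push_cast
    ring

lemma combo_norm_re (a b c d : ℤ) :
    (combo a b c d * star (combo a b c d)).re
      = ((a^2 + b^2 + c^2 + d^2 + (a+b)*(c+d) + c*d : ℤ) : ℝ) := by
  rw [Quaternion.re_mul]
  simp only [Quaternion.re_star, Quaternion.imI_star, Quaternion.imJ_star,
    Quaternion.imK_star, combo_re, combo_imI, combo_imJ, combo_imK]
  push_cast
  linear_combination ((1/4)*(c:ℝ)^2 + (1/4)*(d:ℝ)^2) * hs2

lemma m_mul_combo (m : ℕ) (a b c d : ℤ) :
    (m : ℍ[ℝ]) * combo a b c d = combo (m*a) (m*b) (m*c) (m*d) := by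
  apply QuaternionAlgebra.ext
  · rw [Quaternion.re_mul, combo_re, combo_re]
    simp [Quaternion.re_natCast, Quaternion.imI_natCast, Quaternion.imJ_natCast,
      Quaternion.imK_natCast, combo_imI, combo_imJ, combo_imK]
    push_cast; ring
  · rw [Quaternion.imI_mul, combo_imI, combo_imI]
    simp [Quaternion.re_natCast, Quaternion.imI_natCast, Quaternion.imJ_natCast,
      Quaternion.imK_natCast, combo_re, combo_imJ, combo_imK]
    push_cast; ring
  · rw [Quaternion.imJ_mul, combo_imJ, combo_imJ]
    simp [Quaternion.re_natCast, Quaternion.imI_natCast, Quaternion.imJ_natCast,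
      Quaternion.imK_natCast, combo_re, combo_imI, combo_imK]
    push_cast; ring
  · rw [Quaternion.imK_mul, combo_imK, combo_imK]
    simp [Quaternion.re_natCast, Quaternion.imI_natCast, Quaternion.imJ_natCast,
      Quaternion.imK_natCast, combo_re, combo_imI, combo_imJ]
    push_cast; ring

def comboE {m : ℕ} (x y α β γ δ : ZMod m) : Matrix (Fin 2) (Fin 2) (ZMod m) :=
  !![α + γ*(1+x) + δ*(1-y), -β + γ*(y-1) + δ*(x-1);
     β + γ*(1+y) + δ*(1+x), α + γ*(1-x) + δ*(1+y)]

lemma comboE_mul {m : ℕ} (x y : ZMod m) (hxy : x^2 + y^2 = -2) (α β γ δ α' β' γ' δ' : ZMod m) :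
    comboE x y α β γ δ * comboE x y α' β' γ' δ' =
      comboE x y
        (α*α' - β*β' - 2*β*γ' - 4*γ*γ' - 2*δ*β' - 4*δ*γ' - 4*δ*δ')
        (α*β' + β*α' + 2*β*δ' + 2*γ*β' + 4*γ*δ' - 4*δ*γ')
        (α*γ' + γ*α' + 2*γ*γ' - β*δ' + δ*β' + 2*δ*γ')
        (α*δ' + β*γ' - γ*β' + δ*α' + 2*δ*γ' + 2*δ*δ') := by
  rw [comboE, comboE, comboE, Matrix.mul_fin_two]
  refine Matrix.ext ?_
  intro i j
  fin_cases i <;> fin_cases j <;> simp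
  · linear_combination (γ*γ' + δ*δ') * hxy
  · linear_combination (-γ'*δ + δ'*γ) * hxy
  · linear_combination (γ'*δ - δ'*γ) * hxy
  · linear_combination (γ*γ' + δ*δ') * hxy

lemma comboE_det {m : ℕ} (x y : ZMod m) (hxy : x^2 + y^2 = -2) (α β γ δ : ZMod m) :
    (comboE x y α β γ δ).det
      = α^2 + β^2 + 4*γ^2 + 4*δ^2 + 2*(α+β)*(γ+δ) + 4*γ*δ := by
  rw [comboE, Matrix.det_fin_two_of]
  linear_combination (-γ^2 - δ^2) * hxy

lemma hensel_step (p : ℕ) (hp : p.Prime) (hodd : p ≠ 2) (k : ℕ)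
    (x y : ℤ) (h : (p:ℤ)^k ∣ x^2 + y^2 + 2) (hx : ¬ (p:ℤ) ∣ x) (hk : 1 ≤ k) :
    ∃ x' : ℤ, (p:ℤ)^(k+1) ∣ x'^2 + y^2 + 2 := by
  haveI : Fact p.Prime := ⟨hp⟩
  have hp' : Prime (p:ℤ) := Nat.prime_iff_prime_int.1 hp
  obtain ⟨r, hr⟩ := h
  have h2x : (2 * (x : ZMod p)) ≠ 0 := by
    have : ((2 * x : ℤ) : ZMod p) ≠ 0 := by
      rw [Ne, ZMod.intCast_zmod_eq_zero_iff_dvd]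
      intro hd
      rcases hp'.2.2 2 x hd with h1 | h1
      · have h2 : p ∣ 2 := by exact_mod_cast h1
        exact hodd ((Nat.prime_dvd_prime_iff_eq hp Nat.prime_two).mp h2)
      · exact hx h1
    push_cast at this; exact this
  set u : ZMod p := (-(r : ZMod p)) * (2 * (x : ZMod p))⁻¹ with hu
  refine ⟨x + (u.val : ℤ) * p^k, ?_⟩
  have hinv : (2 * (x:ZMod p)) * (2 * (x:ZMod p))⁻¹ = 1 := mul_inv_cancel₀ h2x
  have key : (p:ℤ) ∣ r + 2*x*(u.val : ℤ) := by
    rw [← ZMod.intCast_zmod_eq_zero_iff_dvd]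
    push_cast
    rw [ZMod.natCast_val, ZMod.cast_id, hu]
    linear_combination (-(r : ZMod p)) * hinv
  obtain ⟨s, hs⟩ := key
  have hdvd : (p:ℤ)^(k+1) ∣ (p:ℤ)^(2*k) * (u.val:ℤ)^2 :=
    Dvd.dvd.mul_right (pow_dvd_pow _ (by omega)) _
  obtain ⟨w, hw⟩ := hdvd
  refine ⟨s + w, ?_⟩
  have e1 : (x + (u.val : ℤ) * p^k)^2 + y^2 + 2
      = (p:ℤ)^k * (r + 2*x*(u.val:ℤ)) + (p:ℤ)^(2*k)*(u.val:ℤ)^2 := by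
    linear_combination hr
  rw [e1, hs, hw, pow_succ]
  ring

lemma prime_pow_sol (p : ℕ) (hp : p.Prime) (hodd : p ≠ 2) (k : ℕ) :
    ∃ x y : ℤ, (p:ℤ)^k ∣ x^2 + y^2 + 2 := by
  haveI : Fact p.Prime := ⟨hp⟩
  have hp' : Prime (p:ℤ) := Nat.prime_iff_prime_int.1 hp
  induction k with
  | zero => exact ⟨0, 0, by norm_num⟩
  | succ n ih =>
    rcases Nat.eq_zero_or_pos n with h0 | h0
    · subst h0
      obtain ⟨a, b, hab⟩ := ZMod.sq_add_sq p (-2)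
      refine ⟨(a.val : ℤ), (b.val : ℤ), ?_⟩
      rw [pow_one, ← ZMod.intCast_zmod_eq_zero_iff_dvd]
      push_cast
      rw [ZMod.natCast_val, ZMod.cast_id, ZMod.natCast_val, ZMod.cast_id]
      linear_combination hab
    · obtain ⟨x, y, h⟩ := ih
      by_cases hx : (p:ℤ) ∣ x
      · have hy : ¬ (p:ℤ) ∣ y := by
          intro hy
          have hpd : (p:ℤ) ∣ x^2 + y^2 + 2 := dvd_trans (dvd_pow_self _ (by omega)) h
          have hd := (hpd.sub (hx.mul_right x)).sub (hy.mul_right y)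
          have he : x^2 + y^2 + 2 - x*x - y*y = 2 := by ring
          rw [he] at hd
          have h2' : p ∣ 2 := by exact_mod_cast hd
          exact hodd ((Nat.prime_dvd_prime_iff_eq hp Nat.prime_two).mp h2')
        have h' : (p:ℤ)^n ∣ y^2 + x^2 + 2 := by
          rw [show y^2+x^2+2 = x^2+y^2+2 by ring]; exact h
        obtain ⟨y', hy'⟩ := hensel_step p hp hodd n y x h' hy h0
        refine ⟨x, y', ?_⟩
        rw [show x^2+y'^2+2 = y'^2+x^2+2 by ring]; exact hy'
      · obtain ⟨x', hx'⟩ := hensel_step p hp hodd n x y h hx h0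
        exact ⟨x', y, hx'⟩

lemma odd_sol (m : ℕ) (hm : Odd m) : ∃ x y : ZMod m, x^2 + y^2 = -2 := by
  induction m using Nat.recOnPosPrimePosCoprime with
  | prime_pow p n hp hn =>
    have hodd : p ≠ 2 := by
      rintro rfl
      exact (Nat.not_odd_iff_even.mpr ⟨2^(n-1), by rw [← two_mul, ← pow_succ']; congr 1; omega⟩) hm
    obtain ⟨x, y, hxy⟩ := prime_pow_sol p hp hodd n
    refine ⟨(x : ZMod (p^n)), (y : ZMod (p^n)), ?_⟩
    have : ((x^2 + y^2 + 2 : ℤ) : ZMod (p^n)) = 0 := by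
      rw [ZMod.intCast_zmod_eq_zero_iff_dvd]
      push_cast
      exact hxy
    push_cast at this
    linear_combination this
  | zero => exact absurd hm (by simp)
  | one => exact ⟨0, 0, Subsingleton.elim _ _⟩
  | coprime a b ha hb hab iha ihb =>
    have hoa : Odd a := (Nat.odd_mul.mp hm).1
    have hob : Odd b := (Nat.odd_mul.mp hm).2
    obtain ⟨x₁, y₁, h₁⟩ := iha hoa
    obtain ⟨x₂, y₂, h₂⟩ := ihb hob
    let e := ZMod.chineseRemainder hab
    refine ⟨e.symm (x₁, x₂), e.symm (y₁, y₂), ?_⟩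
    apply e.injective
    rw [map_add, map_pow, map_pow, e.apply_symm_apply, e.apply_symm_apply, map_neg,
        map_ofNat]
    ext
    · simpa [Prod.pow_fst] using h₁
    · simpa [Prod.pow_snd] using h₂

lemma zmod_lift_cast {m : ℕ} [NeZero m] (u : ZMod m) : ((u.val : ℤ) : ZMod m) = u := by
  push_cast
  rw [ZMod.natCast_val, ZMod.cast_id]

/-- Hurwitz Correspondence Theorem for `H₍₁,₂,₂₎`: for odd positive `m` there is a
map `τ` on `H₍₁,₂,₂₎`, additive and multiplicative on `H₍₁,₂,₂₎`, sending `1` to the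
identity matrix, surjective onto `M₂(ℤ/mℤ)`, whose kernel on `H₍₁,₂,₂₎` is exactly
`m·H₍₁,₂,₂₎`, and which carries the quaternion norm to the determinant modulo `m`.
In particular `τ` induces a ring isomorphism of `H₍₁,₂,₂₎` modulo `m` with
`M₂(ℤ/mℤ)` carrying the norm to the determinant. -/
theorem hurwitz_correspondence (m : ℕ) (hm : Odd m) (hpos : 0 < m) :
    ∃ τ : ℍ[ℝ] → Matrix (Fin 2) (Fin 2) (ZMod m),
      (∀ g ∈ H122, ∀ g' ∈ H122, τ (g + g') = τ g + τ g') ∧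
      (∀ g ∈ H122, ∀ g' ∈ H122, τ (g * g') = τ g * τ g') ∧
      τ 1 = 1 ∧
      (∀ M : Matrix (Fin 2) (Fin 2) (ZMod m), ∃ g ∈ H122, τ g = M) ∧
      (∀ g ∈ H122, (τ g = 0 ↔ ∃ h ∈ H122, g = (m : ℍ[ℝ]) * h)) ∧
      (∀ g ∈ H122, ∀ k : ℤ, g * star g = (k : ℍ[ℝ]) → (τ g).det = (k : ZMod m)) := by
  haveI : NeZero m := ⟨hpos.ne'⟩
  obtain ⟨x, y, hxy⟩ := odd_sol m hm
  set t : ZMod m := (((m+1)/2 : ℕ) : ZMod m) with ht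
  have hdvd2 : 2 ∣ m + 1 := by obtain ⟨k, hk⟩ := hm; omega
  have h2 : (2 : ZMod m) * t = 1 := by
    calc (2 : ZMod m) * t = ((2 * ((m+1)/2) : ℕ) : ZMod m) := by rw [ht]; push_cast; ring
    _ = ((m + 1 : ℕ) : ZMod m) := by rw [Nat.mul_div_cancel' hdvd2]
    _ = 1 := by push_cast; rw [ZMod.natCast_self]; ring
  set τ : ℍ[ℝ] → Matrix (Fin 2) (Fin 2) (ZMod m) := fun q =>
    comboE x y ((az q : ℤ) : ZMod m) ((bz q : ℤ) : ZMod m)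
      (t * ((cz q : ℤ) : ZMod m)) (t * ((dz q : ℤ) : ZMod m)) with hτ
  have hτeval : ∀ a b c d : ℤ, τ (combo a b c d) =
      comboE x y ((a : ZMod m)) ((b : ZMod m)) (t * (c : ZMod m)) (t * (d : ZMod m)) := by
    intro a b c d
    rw [hτ]
    simp only [az_combo, bz_combo, cz_combo, dz_combo]
  refine ⟨τ, ?_, ?_, ?_, ?_, ?_, ?_⟩
  · -- additivity
    rintro g ⟨a, b, c, d, rfl⟩ g' ⟨a', b', c', d', rfl⟩
    show τ (combo a b c d + combo a' b' c' d') = τ (combo a b c d) + τ (combo a' b' c' d')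
    rw [combo_add, hτeval, hτeval, hτeval]
    refine Matrix.ext ?_
    intro i j
    fin_cases i <;> fin_cases j <;> simp [comboE] <;> push_cast <;> ring
  · -- multiplicativity
    rintro g ⟨a, b, c, d, rfl⟩ g' ⟨a', b', c', d', rfl⟩
    show τ (combo a b c d * combo a' b' c' d') = τ (combo a b c d) * τ (combo a' b' c' d')
    rw [combo_mul, hτeval, hτeval, hτeval, comboE_mul x y hxy]
    have e1 : ((a*a' - b*b' - b*c' - c*c' - d*b' - d*c' - d*d' : ℤ) : ZMod m) =
        (a:ZMod m)*(a':ZMod m) - (b:ZMod m)*(b':ZMod m) - 2*(b:ZMod m)*(t*(c':ZMod m))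
        - 4*(t*(c:ZMod m))*(t*(c':ZMod m)) - 2*(t*(d:ZMod m))*(b':ZMod m)
        - 4*(t*(d:ZMod m))*(t*(c':ZMod m)) - 4*(t*(d:ZMod m))*(t*(d':ZMod m)) := by
      push_cast
      linear_combination ((b:ZMod m)*(c':ZMod m) + (c:ZMod m)*(c':ZMod m)
        + 2*(c:ZMod m)*(c':ZMod m)*t + (d:ZMod m)*(b':ZMod m) + (d:ZMod m)*(c':ZMod m)
        + 2*(d:ZMod m)*(c':ZMod m)*t + (d:ZMod m)*(d':ZMod m)
        + 2*(d:ZMod m)*(d':ZMod m)*t) * h2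
    have e2 : ((a*b' + b*a' + b*d' + c*b' + c*d' - d*c' : ℤ) : ZMod m) =
        (a:ZMod m)*(b':ZMod m) + (b:ZMod m)*(a':ZMod m) + 2*(b:ZMod m)*(t*(d':ZMod m))
        + 2*(t*(c:ZMod m))*(b':ZMod m) + 4*(t*(c:ZMod m))*(t*(d':ZMod m))
        - 4*(t*(d:ZMod m))*(t*(c':ZMod m)) := by
      push_cast
      linear_combination (-(b:ZMod m)*(d':ZMod m) - (c:ZMod m)*(b':ZMod m)
        - (c:ZMod m)*(d':ZMod m) - 2*(c:ZMod m)*(d':ZMod m)*t + (d:ZMod m)*(c':ZMod m)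
        + 2*(d:ZMod m)*(c':ZMod m)*t) * h2
    have e3 : t * ((a*c' + c*a' + c*c' - b*d' + d*b' + d*c' : ℤ) : ZMod m) =
        (a:ZMod m)*(t*(c':ZMod m)) + (t*(c:ZMod m))*(a':ZMod m)
        + 2*(t*(c:ZMod m))*(t*(c':ZMod m)) - (b:ZMod m)*(t*(d':ZMod m))
        + (t*(d:ZMod m))*(b':ZMod m) + 2*(t*(d:ZMod m))*(t*(c':ZMod m)) := by
      push_cast
      linear_combination (-(c:ZMod m)*(c':ZMod m)*t - (d:ZMod m)*(c':ZMod m)*t) * h2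
    have e4 : t * ((a*d' + b*c' - c*b' + d*a' + d*c' + d*d' : ℤ) : ZMod m) =
        (a:ZMod m)*(t*(d':ZMod m)) + (b:ZMod m)*(t*(c':ZMod m))
        - (t*(c:ZMod m))*(b':ZMod m) + (t*(d:ZMod m))*(a':ZMod m)
        + 2*(t*(d:ZMod m))*(t*(c':ZMod m)) + 2*(t*(d:ZMod m))*(t*(d':ZMod m)) := by
      push_cast
      linear_combination (-(d:ZMod m)*(c':ZMod m)*t - (d:ZMod m)*(d':ZMod m)*t) * h2
    rw [e1, e2, e3, e4]
  · -- τ 1 = 1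
    rw [show (1 : ℍ[ℝ]) = combo 1 0 0 0 from combo_one.symm, hτeval]
    refine Matrix.ext ?_
    intro i j
    fin_cases i <;> fin_cases j <;> simp [comboE, Matrix.one_apply] <;> push_cast <;> ring
  · -- surjectivity
    intro M
    set p := M 0 0 with hp
    set q := M 0 1 with hq
    set r := M 1 0 with hr
    set w := M 1 1 with hw
    set γ0 : ZMod m := -t*t*(x*(p-w) + y*(q+r)) with hγ0
    set δ0 : ZMod m := -t*t*(-y*(p-w) + x*(q+r)) with hδ0
    set α0 : ZMod m := t*(p+w-2*γ0-2*δ0) with hα0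
    set β0 : ZMod m := t*(r-q-2*γ0-2*δ0) with hβ0
    refine ⟨combo ((α0.val : ℤ)) ((β0.val : ℤ)) (((2*γ0).val : ℤ)) (((2*δ0).val : ℤ)),
      combo_mem _ _ _ _, ?_⟩
    rw [hτeval, zmod_lift_cast, zmod_lift_cast, zmod_lift_cast, zmod_lift_cast]
    have hg2 : t * (2*γ0) = γ0 := by linear_combination γ0 * h2
    have hd2 : t * (2*δ0) = δ0 := by linear_combination δ0 * h2
    rw [hg2, hd2]
    have hM : M = !![p, q; r, w] := by rw [hp, hq, hr, hw, ← Matrix.eta_fin_two]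
    rw [hM]
    rw [hα0, hβ0, hγ0, hδ0]
    refine Matrix.ext ?_
    intro i j
    fin_cases i <;> fin_cases j <;> simp [comboE]
    · linear_combination (p + p*t + p*t^2*x - p*t^2*y + q*t^2*x + q*t^2*y + r*t^2*x + r*t^2*y
        - t*w - t^2*w*x + t^2*w*y) * h2 + (-p*t^2 + t^2*w) * hxy
    · linear_combination (-p*t^2*x + p*t^2*y + q + q*t - q*t^2*x - q*t^2*y + r*t - r*t^2*x
        - r*t^2*y + t^2*w*x - t^2*w*y) * h2 + (-q*t^2 - r*t^2) * hxy
    · linear_combination (p*t^2*x - p*t^2*y + q*t + q*t^2*x + q*t^2*y + r + r*t + r*t^2*x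
        + r*t^2*y - t^2*w*x + t^2*w*y) * h2 + (-q*t^2 - r*t^2) * hxy
    · linear_combination (-p*t + p*t^2*x - p*t^2*y + q*t^2*x + q*t^2*y + r*t^2*x + r*t^2*y
        + t*w - t^2*w*x + t^2*w*y + w) * h2 + (p*t^2 - t^2*w) * hxy
  · -- kernel
    rintro g ⟨a, b, c, d, rfl⟩
    constructor
    · intro h0
      rw [show (a • v₁ + b • v₂ + c • v₃ + d • v₄ : ℍ[ℝ]) = combo a b c d from rfl,
        hτeval] at h0
      have h11 := congrFun (congrFun h0 0) 0
      have h12 := congrFun (congrFun h0 0) 1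
      have h21 := congrFun (congrFun h0 1) 0
      have h22 := congrFun (congrFun h0 1) 1
      simp [comboE] at h11 h12 h21 h22
      have hc : ((c:ℤ) : ZMod m) = 0 := by
        linear_combination (-t*x)*h11 + (-t*y)*h12 + (-t*y)*h21 + (t*x)*h22
          + (-(c:ZMod m) - 2*(c:ZMod m)*t)*h2 + (2*(c:ZMod m)*t^2)*hxy
      have hd : ((d:ℤ) : ZMod m) = 0 := by
        linear_combination (t*y)*h11 + (-t*x)*h12 + (-t*x)*h21 + (-t*y)*h22
          + (-(d:ZMod m) - 2*(d:ZMod m)*t)*h2 + (2*(d:ZMod m)*t^2)*hxy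
      have ha : ((a:ℤ) : ZMod m) = 0 := by
        linear_combination t*h11 + t*h22 + (-2*t^2)*hc + (-2*t^2)*hd + (-(a:ZMod m))*h2
      have hb : ((b:ℤ) : ZMod m) = 0 := by
        linear_combination t*h21 + (-t)*h12 + (-2*t^2)*hc + (-2*t^2)*hd + (-(b:ZMod m))*h2
      obtain ⟨a₁, rfl⟩ := (ZMod.intCast_zmod_eq_zero_iff_dvd a m).mp ha
      obtain ⟨b₁, rfl⟩ := (ZMod.intCast_zmod_eq_zero_iff_dvd b m).mp hb
      obtain ⟨c₁, rfl⟩ := (ZMod.intCast_zmod_eq_zero_iff_dvd c m).mp hc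
      obtain ⟨d₁, rfl⟩ := (ZMod.intCast_zmod_eq_zero_iff_dvd d m).mp hd
      exact ⟨combo a₁ b₁ c₁ d₁, combo_mem _ _ _ _, (m_mul_combo m a₁ b₁ c₁ d₁).symm⟩
    · rintro ⟨h, ⟨a₁, b₁, c₁, d₁, rfl⟩, heq⟩
      rw [show (a • v₁ + b • v₂ + c • v₃ + d • v₄ : ℍ[ℝ]) = combo a b c d from rfl] at heq ⊢
      rw [show (a₁ • v₁ + b₁ • v₂ + c₁ • v₃ + d₁ • v₄ : ℍ[ℝ]) = combo a₁ b₁ c₁ d₁ from rfl]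
        at heq
      rw [heq, m_mul_combo, hτeval]
      refine Matrix.ext ?_
      intro i j
      fin_cases i <;> fin_cases j <;> simp [comboE] <;> push_cast [ZMod.natCast_self] <;> ring
  · -- norm to determinant
    rintro g ⟨a, b, c, d, rfl⟩ k hk
    rw [show (a • v₁ + b • v₂ + c • v₃ + d • v₄ : ℍ[ℝ]) = combo a b c d from rfl] at hk ⊢
    have hre := congrArg QuaternionAlgebra.re hk
    rw [combo_norm_re] at hre
    have hkre : ((k : ℍ[ℝ])).re = (k : ℝ) := by simp
    rw [hkre] at hre
    have hNk : (a^2 + b^2 + c^2 + d^2 + (a+b)*(c+d) + c*d : ℤ) = k := by exact_mod_cast hre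
    rw [hτeval, comboE_det x y hxy, ← hNk]
    push_cast
    linear_combination ((a:ZMod m)*(c:ZMod m) + (a:ZMod m)*(d:ZMod m) + (b:ZMod m)*(c:ZMod m)
      + (b:ZMod m)*(d:ZMod m) + (c:ZMod m)*(d:ZMod m) + 2*(c:ZMod m)*(d:ZMod m)*t
      + (c:ZMod m)^2 + 2*(c:ZMod m)^2*t + (d:ZMod m)^2 + 2*(d:ZMod m)^2*t) * h2
end
end

section
/- Let m be an odd positive integer. The number of quadruples (q₁, q₂, q₃, q₄) ∈ (ℤ/mℤ)⁴ such that q₁² + q₂² + 2q₃² + 2q₄² = 0 in ℤ/mℤ and gcd(q₁, q₂, q₃, q₄, m) = 1 (for integer lifts of the qᵢ) equals ψ(m) = m³ · ∏_{p ∣ m} (1 − 1/p²)(1 + 1/p), where the product runs over the distinct primes p dividing m. -/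
open Finset

namespace CPNV

abbrev V (n : ℕ) := ZMod n × ZMod n × ZMod n × ZMod n

def Qf {n : ℕ} (q : V n) : ZMod n :=
  q.1 ^ 2 + q.2.1 ^ 2 + 2 * q.2.2.1 ^ 2 + 2 * q.2.2.2 ^ 2

def Prim {n : ℕ} (q : V n) : Prop :=
  ∃ x y z w : ZMod n, x * q.1 + y * q.2.1 + z * q.2.2.1 + w * q.2.2.2 = 1

instance {n : ℕ} [NeZero n] (q : V n) : Decidable (Prim q) := by
  unfold Prim; infer_instance

noncomputable def f (n : ℕ) : ℕ := Nat.card {q : V n // Qf q = 0 ∧ Prim q}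

lemma bezout2 (a b : ℕ) : ∃ x y : ℤ, (Nat.gcd a b : ℤ) = a * x + b * y :=
  ⟨Nat.gcdA a b, Nat.gcdB a b, Nat.gcd_eq_gcd_ab a b⟩

lemma gcd_eq_one_iff_prim {n : ℕ} [NeZero n] (q : V n) :
    Nat.gcd (Nat.gcd (Nat.gcd (Nat.gcd q.1.val q.2.1.val) q.2.2.1.val) q.2.2.2.val) n = 1 ↔
      Prim q := by
  obtain ⟨a, b, c, d⟩ := q
  simp only [Prim]
  constructor
  · intro h
    obtain ⟨x1, y1, h1⟩ := bezout2 a.val b.val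
    obtain ⟨x2, y2, h2⟩ := bezout2 (Nat.gcd a.val b.val) c.val
    obtain ⟨x3, y3, h3⟩ := bezout2 (Nat.gcd (Nat.gcd a.val b.val) c.val) d.val
    obtain ⟨x4, y4, h4⟩ := bezout2 (Nat.gcd (Nat.gcd (Nat.gcd a.val b.val) c.val) d.val) n
    rw [h] at h4
    push_cast at h4
    refine ⟨↑(x1 * x2 * x3 * x4), ↑(y1 * x2 * x3 * x4), ↑(y2 * x3 * x4), ↑(y3 * x4), ?_⟩
    have hZ : (1 : ℤ) = (a.val : ℤ) * (x1 * x2 * x3 * x4) + (b.val : ℤ) * (y1 * x2 * x3 * x4)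
        + (c.val : ℤ) * (y2 * x3 * x4) + (d.val : ℤ) * (y3 * x4) + n * y4 := by
      linear_combination h4 + x4 * h3 + (x3 * x4) * h2 + (x2 * x3 * x4) * h1
    have := congrArg (fun t : ℤ => (t : ZMod n)) hZ
    push_cast at this
    simp only [ZMod.natCast_val, ZMod.cast_id, ZMod.natCast_self, zero_mul, add_zero,
      mul_zero] at this
    push_cast
    linear_combination this.symm
  · rintro ⟨x, y, z, w, hx⟩
    set g := Nat.gcd (Nat.gcd (Nat.gcd (Nat.gcd a.val b.val) c.val) d.val) n with hg
    have hgn : g ∣ n := Nat.gcd_dvd_right _ _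
    have : NeZero g := ⟨fun h0 => (NeZero.ne n) (Nat.eq_zero_of_zero_dvd (h0 ▸ hgn))⟩
    have hg4 : g ∣ Nat.gcd (Nat.gcd (Nat.gcd a.val b.val) c.val) d.val := Nat.gcd_dvd_left _ _
    have hga : g ∣ a.val := hg4.trans ((Nat.gcd_dvd_left _ _).trans
      ((Nat.gcd_dvd_left _ _).trans (Nat.gcd_dvd_left _ _)))
    have hgb : g ∣ b.val := hg4.trans ((Nat.gcd_dvd_left _ _).trans
      ((Nat.gcd_dvd_left _ _).trans (Nat.gcd_dvd_right _ _)))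
    have hgc : g ∣ c.val := hg4.trans ((Nat.gcd_dvd_left _ _).trans (Nat.gcd_dvd_right _ _))
    have hgd : g ∣ d.val := hg4.trans (Nat.gcd_dvd_right _ _)
    set φ := ZMod.castHom hgn (ZMod g) with hφ
    have hz : ∀ (e : ZMod n), g ∣ e.val → φ e = 0 := by
      intro e he
      have h' : φ e = (e.val : ZMod g) := by
        simp [hφ, ZMod.castHom_apply, ZMod.natCast_val]
      rw [h', ZMod.natCast_eq_zero_iff]
      exact he
    have h1 : ((1 : ℕ) : ZMod g) = 0 := by
      have h2 := congrArg φ hx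
      simpa [map_add, map_mul, hz a hga, hz b hgb, hz c hgc, hz d hgd] using h2.symm
    rw [ZMod.natCast_eq_zero_iff] at h1
    exact Nat.dvd_one.mp h1
  

-- prime-level counting
lemma card_filter_prod {α β : Type*} [Fintype α] [Fintype β] (P : α × β → Prop)
    [DecidablePred P] :
    (univ.filter P).card = ∑ a : α, (univ.filter fun b : β => P (a, b)).card := by
  rw [Finset.card_filter, Fintype.sum_prod_type]
  congr 1 with a
  rw [Finset.card_filter]

section PrimeCount

variable {p : ℕ} [Fact p.Prime] (hp2 : p ≠ 2)
include hp2

lemma hF' : ringChar (ZMod p) ≠ 2 := by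
  rw [ZMod.ringChar_zmod_n]; exact hp2

lemma sqrt_count (a : ZMod p) :
    ((univ.filter fun x : ZMod p => x ^ 2 = a).card : ℤ) = quadraticChar (ZMod p) a + 1 := by
  have := quadraticChar_card_sqrts (hF' hp2) a
  rw [← this]
  congr 1
  simp [Set.toFinset_setOf]

lemma jacobi_aux (c : ZMod p) :
    ∑ a : ZMod p, quadraticChar (ZMod p) a * quadraticChar (ZMod p) (c - a) =
      if c = 0 then quadraticChar (ZMod p) (-1) * (p - 1 : ℤ) else -quadraticChar (ZMod p) (-1) := by
  rcases eq_or_ne c 0 with hc | hc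
  · subst hc
    simp only [if_true, zero_sub]
    have h1 : ∀ a : ZMod p, quadraticChar (ZMod p) a * quadraticChar (ZMod p) (-a) =
        quadraticChar (ZMod p) (-1) * (if a = 0 then 0 else 1) := by
      intro a
      rcases eq_or_ne a 0 with rfl | ha
      · simp
      · rw [if_neg ha, show -a = -1 * a by ring, map_mul]
        ring_nf
        rw [quadraticChar_sq_one (F := ZMod p) ha, one_mul]
    rw [Finset.sum_congr rfl fun a _ => h1 a, ← Finset.mul_sum]
    have hs : ∑ i : ZMod p, (if i = 0 then (0:ℤ) else 1) = (p - 1 : ℤ) := by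
      rw [Finset.sum_ite, Finset.sum_const_zero, Finset.sum_const, zero_add, nsmul_eq_mul,
        mul_one, Finset.filter_ne', Finset.card_erase_of_mem (Finset.mem_univ _)]
      rw [Finset.card_univ, ZMod.card]
      have : (1 : ℕ) ≤ p := (Fact.out : p.Prime).one_lt.le
      push_cast [Nat.cast_sub this]
      ring
    rw [hs]
  · rw [if_neg hc]
    have key := Fintype.sum_equiv (Equiv.mulLeft₀ c hc)
      (fun t => quadraticChar (ZMod p) (c * t) * quadraticChar (ZMod p) (c - c * t))
      (fun a => quadraticChar (ZMod p) a * quadraticChar (ZMod p) (c - a))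
      (fun t => by simp [Equiv.mulLeft₀])
    rw [← key]
    have h2 : ∀ t : ZMod p, quadraticChar (ZMod p) (c * t) * quadraticChar (ZMod p) (c - c * t)
        = quadraticChar (ZMod p) t * quadraticChar (ZMod p) (1 - t) := by
      intro t
      rw [show c - c * t = c * (1 - t) by ring, map_mul, map_mul]
      ring_nf
      rw [quadraticChar_sq_one (F := ZMod p) hc, one_mul]
    rw [Finset.sum_congr rfl fun t _ => h2 t]
    have : ∑ t : ZMod p, quadraticChar (ZMod p) t * quadraticChar (ZMod p) (1 - t) =
        jacobiSum (quadraticChar (ZMod p)) (quadraticChar (ZMod p)) := by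
      rw [jacobiSum]
    rw [this]
    nth_rewrite 2 [← (quadraticChar_isQuadratic (ZMod p)).inv]
    exact jacobiSum_nontrivial_inv (quadraticChar_ne_one (hF' hp2))

lemma circle_count (c : ZMod p) :
    ((univ.filter fun v : ZMod p × ZMod p => v.1 ^ 2 + v.2 ^ 2 = c).card : ℤ) =
      p + (if c = 0 then quadraticChar (ZMod p) (-1) * (p - 1 : ℤ)
        else -quadraticChar (ZMod p) (-1)) := by
  rw [card_filter_prod]
  push_cast
  have inner : ∀ x : ZMod p, ((univ.filter fun y : ZMod p => x ^ 2 + y ^ 2 = c).card : ℤ) =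
      quadraticChar (ZMod p) (c - x ^ 2) + 1 := by
    intro x
    rw [← sqrt_count hp2 (c - x ^ 2)]
    exact_mod_cast congrArg Finset.card
      (Finset.filter_congr fun y _ => (eq_sub_iff_add_eq' (b := c)).symm)
  rw [Finset.sum_congr rfl fun x _ => inner x, Finset.sum_add_distrib, Finset.sum_const,
    Finset.card_univ, ZMod.card, nsmul_eq_mul, mul_one]
  have fib : ∑ x : ZMod p, quadraticChar (ZMod p) (c - x ^ 2) =
      ∑ a : ZMod p, ((univ.filter fun x : ZMod p => x ^ 2 = a).card : ℤ) *
        quadraticChar (ZMod p) (c - a) := by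
    rw [← Finset.sum_fiberwise_of_maps_to (fun x (_ : x ∈ univ) => Finset.mem_univ (x ^ 2))
      (fun x => quadraticChar (ZMod p) (c - x ^ 2))]
    refine Finset.sum_congr rfl fun a _ => ?_
    have hcg : ∀ x ∈ univ.filter (fun x : ZMod p => x ^ 2 = a),
        quadraticChar (ZMod p) (c - x ^ 2) = quadraticChar (ZMod p) (c - a) := by
      intro x hx
      rw [(Finset.mem_filter.mp hx).2]
    rw [Finset.sum_congr rfl hcg, Finset.sum_const, nsmul_eq_mul]
  rw [fib]
  have expand : ∀ a : ZMod p, ((univ.filter fun x : ZMod p => x ^ 2 = a).card : ℤ) *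
      quadraticChar (ZMod p) (c - a) =
      quadraticChar (ZMod p) a * quadraticChar (ZMod p) (c - a) +
        quadraticChar (ZMod p) (c - a) := by
    intro a
    rw [sqrt_count hp2 a]
    ring
  rw [Finset.sum_congr rfl fun a _ => expand a, Finset.sum_add_distrib]
  have h0 : ∑ a : ZMod p, quadraticChar (ZMod p) (c - a) = 0 := by
    have he := Fintype.sum_equiv (Equiv.subLeft c) (fun a => quadraticChar (ZMod p) (c - a))
      (fun b => quadraticChar (ZMod p) b) (fun a => rfl)
    exact he.trans (quadraticChar_sum_zero (hF' hp2))
  rw [h0, jacobi_aux hp2 c]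
  ring

lemma pair_count (c : ZMod p) :
    ((univ.filter fun v : ZMod p × ZMod p => c + 2 * v.1 ^ 2 + 2 * v.2 ^ 2 = 0).card : ℤ) =
      p + (if c = 0 then quadraticChar (ZMod p) (-1) * (p - 1 : ℤ)
        else -quadraticChar (ZMod p) (-1)) := by
  have h2 : (2 : ZMod p) ≠ 0 := Ring.two_ne_zero (hF' hp2)
  have hcond : ∀ v : ZMod p × ZMod p,
      (c + 2 * v.1 ^ 2 + 2 * v.2 ^ 2 = 0) ↔ (v.1 ^ 2 + v.2 ^ 2 = 2⁻¹ * (-c)) := by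
    intro v
    rw [eq_inv_mul_iff_mul_eq₀ h2]
    constructor <;> intro h <;> linear_combination h
  rw [Finset.filter_congr fun v _ => hcond v, circle_count hp2]
  have : (2⁻¹ * (-c) = 0) ↔ (c = 0) := by
    rw [mul_eq_zero, inv_eq_zero, neg_eq_zero]
    simp [h2]
  rw [if_congr this rfl rfl]

set_option maxHeartbeats 1000000 in
lemma quad_count :
    ((univ.filter fun q : ZMod p × ZMod p × ZMod p × ZMod p =>
        q.1 ^ 2 + q.2.1 ^ 2 + 2 * q.2.2.1 ^ 2 + 2 * q.2.2.2 ^ 2 = 0).card : ℤ) =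
      p ^ 3 + p ^ 2 - p := by
  rw [card_filter_prod]
  push_cast
  have inner : ∀ x : ZMod p,
      ((univ.filter fun r : ZMod p × ZMod p × ZMod p =>
        x ^ 2 + r.1 ^ 2 + 2 * r.2.1 ^ 2 + 2 * r.2.2 ^ 2 = 0).card : ℤ) =
      ∑ y : ZMod p, ((univ.filter fun v : ZMod p × ZMod p =>
        (x ^ 2 + y ^ 2) + 2 * v.1 ^ 2 + 2 * v.2 ^ 2 = 0).card : ℤ) := by
    intro x
    rw [card_filter_prod]
    push_cast
    refine Finset.sum_congr rfl fun y _ => rfl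
  rw [Finset.sum_congr rfl fun x _ => inner x]
  have step : ∀ x : ZMod p, ∑ y : ZMod p, ((univ.filter fun v : ZMod p × ZMod p =>
      (x ^ 2 + y ^ 2) + 2 * v.1 ^ 2 + 2 * v.2 ^ 2 = 0).card : ℤ) =
      ∑ y : ZMod p, ((p : ℤ) + (if x ^ 2 + y ^ 2 = 0 then
        quadraticChar (ZMod p) (-1) * (p - 1 : ℤ) else -quadraticChar (ZMod p) (-1))) :=
    fun x => Finset.sum_congr rfl fun y _ => pair_count hp2 _
  rw [Finset.sum_congr rfl fun x _ => step x]
  rw [Finset.sum_congr rfl fun x _ => Finset.sum_add_distrib, Finset.sum_add_distrib]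
  have hconst : ∑ _x : ZMod p, ∑ _y : ZMod p, (p : ℤ) = (p : ℤ) ^ 3 := by
    simp only [Finset.sum_const, Finset.card_univ, ZMod.card, nsmul_eq_mul]
    ring
  rw [hconst]
  have recomb : ∑ x : ZMod p, ∑ y : ZMod p,
      (if x ^ 2 + y ^ 2 = 0 then quadraticChar (ZMod p) (-1) * (p - 1 : ℤ)
        else -quadraticChar (ZMod p) (-1)) =
      ∑ v : ZMod p × ZMod p, (if v.1 ^ 2 + v.2 ^ 2 = 0 then
        quadraticChar (ZMod p) (-1) * (p - 1 : ℤ) else -quadraticChar (ZMod p) (-1)) :=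
    (Fintype.sum_prod_type (fun v : ZMod p × ZMod p => if v.1 ^ 2 + v.2 ^ 2 = 0 then
      quadraticChar (ZMod p) (-1) * ((p : ℤ) - 1) else -quadraticChar (ZMod p) (-1))).symm
  rw [recomb]
  rw [Finset.sum_ite, Finset.sum_const, Finset.sum_const, nsmul_eq_mul, nsmul_eq_mul]
  have hcards : ((univ.filter fun v : ZMod p × ZMod p => v.1 ^ 2 + v.2 ^ 2 = 0).card : ℤ) +
      ((univ.filter fun v : ZMod p × ZMod p => ¬(v.1 ^ 2 + v.2 ^ 2 = 0)).card : ℤ) =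
      (p : ℤ) ^ 2 := by
    rw [← Nat.cast_add, Finset.card_filter_add_card_filter_not, Finset.card_univ]
    push_cast [Fintype.card_prod, ZMod.card]
    ring
  have hc0 := circle_count hp2 (0 : ZMod p)
  rw [if_pos rfl] at hc0
  have hdich : quadraticChar (ZMod p) (-1) = 1 ∨ quadraticChar (ZMod p) (-1) = -1 :=
    quadraticChar_dichotomy (neg_ne_zero.mpr one_ne_zero)
  set ε := quadraticChar (ZMod p) (-1) with hε
  set A := ((univ.filter fun v : ZMod p × ZMod p => v.1 ^ 2 + v.2 ^ 2 = 0).card : ℤ) with hA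
  set B := ((univ.filter fun v : ZMod p × ZMod p => ¬(v.1 ^ 2 + v.2 ^ 2 = 0)).card : ℤ) with hB
  rcases hdich with h | h <;> rw [h] at hc0 ⊢
  · linear_combination (↑p : ℤ) * hc0 - hcards
  · linear_combination (-(↑p : ℤ)) * hc0 + hcards


end PrimeCount

lemma f_one : f 1 = 1 := by
  have h : ∀ q : V 1, Qf q = 0 ∧ Prim q := by
    intro q
    exact ⟨Subsingleton.elim _ _, ⟨0, 0, 0, 0, Subsingleton.elim _ _⟩⟩
  rw [f, Nat.card_congr (Equiv.subtypeUnivEquiv h)]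
  exact Nat.card_unique

section CRT

variable {a b : ℕ}

noncomputable def crtΦ (hab : Nat.Coprime a b) : V (a * b) ≃ V a × V b :=
  letI e := ZMod.chineseRemainder hab
  { toFun := fun q => (((e q.1).1, (e q.2.1).1, (e q.2.2.1).1, (e q.2.2.2).1),
      ((e q.1).2, (e q.2.1).2, (e q.2.2.1).2, (e q.2.2.2).2))
    invFun := fun r => (e.symm (r.1.1, r.2.1), e.symm (r.1.2.1, r.2.2.1),
      e.symm (r.1.2.2.1, r.2.2.2.1), e.symm (r.1.2.2.2, r.2.2.2.2))
    left_inv := fun q => by simp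
    right_inv := fun r => by simp }

lemma crt_cond (hab : Nat.Coprime a b) (q : V (a * b)) :
    (Qf q = 0 ∧ Prim q) ↔
      ((Qf (crtΦ hab q).1 = 0 ∧ Prim (crtΦ hab q).1) ∧
       (Qf (crtΦ hab q).2 = 0 ∧ Prim (crtΦ hab q).2)) := by
  set e := ZMod.chineseRemainder hab with he
  have hQ : Qf q = 0 ↔ Qf (crtΦ hab q).1 = 0 ∧ Qf (crtΦ hab q).2 = 0 := by
    rw [← map_eq_zero_iff e.toRingHom e.injective]
    rw [Prod.ext_iff]
    constructor <;> (intro h; convert h using 2 <;>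
      simp [Qf, crtΦ, he, map_add, map_mul, map_pow, map_ofNat])
  have hP : Prim q ↔ Prim (crtΦ hab q).1 ∧ Prim (crtΦ hab q).2 := by
    constructor
    · rintro ⟨x, y, z, w, hx⟩
      have h2 := congrArg e hx
      simp only [map_add, map_mul, map_one] at h2
      rw [Prod.ext_iff] at h2
      exact ⟨⟨(e x).1, (e y).1, (e z).1, (e w).1, h2.1⟩,
             ⟨(e x).2, (e y).2, (e z).2, (e w).2, h2.2⟩⟩
    · rintro ⟨⟨x, y, z, w, hx⟩, ⟨x', y', z', w', hx'⟩⟩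
      refine ⟨e.symm (x, x'), e.symm (y, y'), e.symm (z, z'), e.symm (w, w'), ?_⟩
      apply e.injective
      simp only [map_add, map_mul, map_one, RingEquiv.apply_symm_apply]
      rw [Prod.ext_iff]
      constructor
      · convert hx using 1 <;> simp [crtΦ, he]
      · convert hx' using 1 <;> simp [crtΦ, he]
  rw [hQ, hP]
  tauto

lemma f_mul (hab : Nat.Coprime a b) : f (a * b) = f a * f b := by
  rw [f, f, f, ← Nat.card_prod]
  apply Nat.card_congr
  exact (Equiv.subtypeEquiv (crtΦ hab) (crt_cond hab)).trans
    (Equiv.subtypeProdEquivProd)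

end CRT

lemma nat_card_eq_filter_card {α : Type*} [Fintype α] [DecidableEq α] (P : α → Prop)
    [DecidablePred P] : Nat.card {x : α // P x} = (univ.filter P).card := by
  rw [Nat.card_eq_fintype_card, Fintype.card_subtype]

section PrimeVal

variable {p : ℕ} [Fact p.Prime]

lemma prim_iff_ne_zero (q : V p) : Prim q ↔ q ≠ 0 := by
  constructor
  · rintro ⟨x, y, z, w, h⟩ rfl
    simp only [Prod.fst_zero, Prod.snd_zero, mul_zero, add_zero, zero_add] at h
    exact one_ne_zero h.symm
  · intro hq
    by_cases h1 : q.1 ≠ 0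
    · exact ⟨q.1⁻¹, 0, 0, 0, by simp [inv_mul_cancel₀ h1]⟩
    by_cases h2 : q.2.1 ≠ 0
    · exact ⟨0, q.2.1⁻¹, 0, 0, by simp [inv_mul_cancel₀ h2]⟩
    by_cases h3 : q.2.2.1 ≠ 0
    · exact ⟨0, 0, q.2.2.1⁻¹, 0, by simp [inv_mul_cancel₀ h3]⟩
    by_cases h4 : q.2.2.2 ≠ 0
    · exact ⟨0, 0, 0, q.2.2.2⁻¹, by simp [inv_mul_cancel₀ h4]⟩
    push_neg at h1 h2 h3 h4
    exact absurd (Prod.ext h1 (Prod.ext h2 (Prod.ext h3 h4))) hq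

lemma f_prime (hp2 : p ≠ 2) : (f p : ℤ) = p ^ 3 + p ^ 2 - p - 1 := by
  rw [f, nat_card_eq_filter_card]
  have hset : (univ.filter fun q : V p => Qf q = 0 ∧ Prim q) =
      (univ.filter fun q : V p => Qf q = 0).erase 0 := by
    ext q
    simp only [Finset.mem_filter, Finset.mem_erase, Finset.mem_univ, true_and]
    rw [prim_iff_ne_zero]
    tauto
  rw [hset, Finset.card_erase_of_mem (Finset.mem_filter.mpr ⟨Finset.mem_univ _, by simp [Qf]⟩)]
  have hpos : 0 < (univ.filter fun q : V p => Qf q = 0).card :=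
    Finset.card_pos.mpr ⟨0, Finset.mem_filter.mpr ⟨Finset.mem_univ _, by simp [Qf]⟩⟩
  push_cast [Nat.cast_sub hpos]
  have := quad_count (p := p) hp2
  simp only [Qf]
  exact congrArg (· - (1 : ℤ)) this

end PrimeVal

section Hensel

variable {p k : ℕ} [hp : Fact p.Prime]

lemma ker_cast {N d : ℕ} [NeZero N] (hd : d ∣ N) (x : ZMod N) :
    ZMod.castHom hd (ZMod d) x = 0 ↔ ∃ y : ZMod N, x = d * y := by
  haveI : NeZero d := ⟨fun h => (NeZero.ne N) (Nat.eq_zero_of_zero_dvd (h ▸ hd))⟩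
  constructor
  · intro h
    have hcv : ((x.val : ℕ) : ZMod d) = 0 := by
      rw [ZMod.natCast_val]
      rwa [ZMod.castHom_apply] at h
    obtain ⟨j, hj⟩ := (ZMod.natCast_eq_zero_iff _ _).mp hcv
    refine ⟨(j : ZMod N), ?_⟩
    have hx : ((x.val : ℕ) : ZMod N) = x := by
      rw [ZMod.natCast_val, ZMod.cast_id]
    rw [← hx, hj]
    push_cast
    ring
  · rintro ⟨y, rfl⟩
    rw [map_mul, map_natCast, ZMod.natCast_self, zero_mul]

/-- The canonical projection `ZMod (p^(k+1)) → ZMod (p^k)`. -/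
noncomputable def pihom (p k : ℕ) : ZMod (p ^ (k + 1)) →+* ZMod (p ^ k) :=
  ZMod.castHom (pow_dvd_pow p (Nat.le_succ k)) _

lemma NeZero_ppow {m : ℕ} : NeZero (p ^ m) := ⟨pow_ne_zero m hp.out.pos.ne'⟩

lemma ker_sq_zero (hk : 1 ≤ k) {x y : ZMod (p ^ (k + 1))}
    (hx : pihom p k x = 0) (hy : pihom p k y = 0) : x * y = 0 := by
  haveI := NeZero_ppow (p := p) (m := k + 1)
  obtain ⟨a, rfl⟩ := (ker_cast (pow_dvd_pow p (Nat.le_succ k)) x).mp hx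
  obtain ⟨b, rfl⟩ := (ker_cast (pow_dvd_pow p (Nat.le_succ k)) y).mp hy
  have hz : ((p ^ k : ℕ) : ZMod (p ^ (k + 1))) * ((p ^ k : ℕ) : ZMod (p ^ (k + 1))) = 0 := by
    have hee : (p : ℕ) ^ k * p ^ k = p ^ (k + 1) * p ^ (k - 1) := by
      rw [← pow_add, ← pow_add]
      congr 1
      omega
    rw [← Nat.cast_mul, hee, Nat.cast_mul, ZMod.natCast_self, zero_mul]
  linear_combination (a * b) * hz

lemma isUnit_of_cast_ne_zero {m : ℕ} (hm : m ≠ 0) {x : ZMod (p ^ m)}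
    (hx : ZMod.castHom (dvd_pow_self p hm) (ZMod p) x ≠ 0) : IsUnit x := by
  haveI := NeZero_ppow (p := p) (m := m)
  have hval : ¬ p ∣ x.val := by
    intro hdvd
    apply hx
    rw [ZMod.castHom_apply, ← ZMod.natCast_val]
    exact (ZMod.natCast_eq_zero_iff _ _).mpr hdvd
  have hx' : ((x.val : ℕ) : ZMod (p ^ m)) = x := by
    rw [ZMod.natCast_val, ZMod.cast_id]
  rw [← hx']
  rw [ZMod.isUnit_iff_coprime]
  exact Nat.Coprime.pow_right m ((Nat.coprime_comm.mp ((hp.out.coprime_iff_not_dvd).mpr hval)))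

/-- Componentwise projection on quadruples. -/
noncomputable def Pi4 (p k : ℕ) : V (p ^ (k + 1)) → V (p ^ k) := fun u =>
  (pihom p k u.1, pihom p k u.2.1, pihom p k u.2.2.1, pihom p k u.2.2.2)

lemma Qf_Pi4 (u : V (p ^ (k + 1))) : Qf (Pi4 p k u) = pihom p k (Qf u) := by
  simp [Qf, Pi4, map_add, map_mul, map_pow, map_ofNat]

lemma prim_lift (hk : 1 ≤ k) (u : V (p ^ (k + 1))) (h : Prim (Pi4 p k u)) : Prim u := by
  obtain ⟨x, y, z, w, hx⟩ := h
  obtain ⟨x', hx'⟩ := ZMod.ringHom_surjective (pihom p k) x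
  obtain ⟨y', hy'⟩ := ZMod.ringHom_surjective (pihom p k) y
  obtain ⟨z', hz'⟩ := ZMod.ringHom_surjective (pihom p k) z
  obtain ⟨w', hw'⟩ := ZMod.ringHom_surjective (pihom p k) w
  set s := x' * u.1 + y' * u.2.1 + z' * u.2.2.1 + w' * u.2.2.2 with hs
  have hπs : pihom p k s = 1 := by
    rw [hs]
    simp only [map_add, map_mul, hx', hy', hz', hw']
    exact hx
  have hker : pihom p k (s - 1) = 0 := by rw [map_sub, hπs, map_one, sub_self]
  have hsq : (s - 1) * (s - 1) = 0 := ker_sq_zero hk hker hker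
  have hinv : s * (2 - s) = 1 := by linear_combination -hsq
  refine ⟨x' * (2 - s), y' * (2 - s), z' * (2 - s), w' * (2 - s), ?_⟩
  rw [← hinv, hs]
  ring

lemma card_ker : Nat.card {x : ZMod (p ^ (k + 1)) // pihom p k x = 0} = p := by
  haveI := NeZero_ppow (p := p) (m := k + 1)
  haveI := NeZero_ppow (p := p) (m := k)
  set g : ZMod (p ^ (k + 1)) →+ ZMod (p ^ k) := (pihom p k).toAddMonoidHom with hg
  have hsurj : Function.Surjective g := ZMod.ringHom_surjective (pihom p k)
  have h1 : Nat.card (ZMod (p ^ (k + 1))) =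
      Nat.card (ZMod (p ^ (k + 1)) ⧸ g.ker) * Nat.card g.ker :=
    AddSubgroup.card_eq_card_quotient_mul_card_addSubgroup _
  have h2 : Nat.card (ZMod (p ^ (k + 1)) ⧸ g.ker) = Nat.card (ZMod (p ^ k)) :=
    Nat.card_congr (QuotientAddGroup.quotientKerEquivOfSurjective g hsurj).toEquiv
  rw [h2, Nat.card_zmod, Nat.card_zmod] at h1
  have h3 : Nat.card {x : ZMod (p ^ (k + 1)) // pihom p k x = 0} = Nat.card g.ker :=
    Nat.card_congr (Equiv.subtypeEquivRight fun x => by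
      rw [AddMonoidHom.mem_ker]
      exact Iff.rfl)
  rw [h3]
  have hppos : 0 < p ^ k := pow_pos hp.out.pos k
  apply Nat.eq_of_mul_eq_mul_left hppos
  rw [← h1, pow_succ]

end Hensel

section Hensel2

variable {p k : ℕ} [hp : Fact p.Prime]

/-- The kernel of the projection, as a type. -/
abbrev Kt (p k : ℕ) := {x : ZMod (p ^ (k + 1)) // pihom p k x = 0}

noncomputable def linear_equiv_one {c₁ c₂ c₃ c₄ r : ZMod (p ^ (k + 1))} (hc : IsUnit c₁)
    (hr : pihom p k r = 0) :
    {δ : Kt p k × Kt p k × Kt p k × Kt p k //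
      c₁ * δ.1.1 + c₂ * δ.2.1.1 + c₃ * δ.2.2.1.1 + c₄ * δ.2.2.2.1 = r} ≃
    (Kt p k × Kt p k × Kt p k) where
  toFun δ := δ.1.2
  invFun s := ⟨(⟨(hc.unit⁻¹ : _) * (r - c₂ * s.1.1 - c₃ * s.2.1.1 - c₄ * s.2.2.1), by
      rw [map_mul, map_sub, map_sub, map_sub, hr, map_mul, map_mul, map_mul,
        s.1.2, s.2.1.2, s.2.2.2, mul_zero, mul_zero, mul_zero, sub_zero, sub_zero,
        zero_sub, neg_zero, mul_zero]⟩, s.1, s.2.1, s.2.2), by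
      have hcu : c₁ * ((hc.unit⁻¹ : _) : ZMod (p ^ (k + 1))) = 1 := by
        have h' := hc.unit.mul_inv
        rwa [hc.unit_spec] at h'
      dsimp only
      linear_combination (r - c₂ * s.1.1 - c₃ * s.2.1.1 - c₄ * s.2.2.1) * hcu⟩
  left_inv δ := by
    have hcu : c₁ * ((hc.unit⁻¹ : _) : ZMod (p ^ (k + 1))) = 1 := by
      have h' := hc.unit.mul_inv
      rwa [hc.unit_spec] at h'
    apply Subtype.ext
    refine Prod.ext ?_ rfl
    apply Subtype.ext
    dsimp only
    linear_combination (δ.1.1.1 : ZMod (p ^ (k + 1))) * hcu -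
      ((hc.unit⁻¹ : _) : ZMod (p ^ (k + 1))) * δ.2
  right_inv s := rfl

lemma card_linear_fiber {c₁ c₂ c₃ c₄ r : ZMod (p ^ (k + 1))} (hr : pihom p k r = 0)
    (hu : IsUnit c₁ ∨ IsUnit c₂ ∨ IsUnit c₃ ∨ IsUnit c₄) :
    Nat.card {δ : Kt p k × Kt p k × Kt p k × Kt p k //
      c₁ * δ.1.1 + c₂ * δ.2.1.1 + c₃ * δ.2.2.1.1 + c₄ * δ.2.2.2.1 = r} = p ^ 3 := by
  have hcard : Nat.card (Kt p k × Kt p k × Kt p k) = p ^ 3 := by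
    rw [Nat.card_prod, Nat.card_prod, card_ker]
    ring
  rcases hu with hc | hc | hc | hc
  · rw [Nat.card_congr (linear_equiv_one hc hr), hcard]
  · have e := Equiv.subtypeEquiv (p := fun δ : Kt p k × Kt p k × Kt p k × Kt p k =>
        c₁ * δ.1.1 + c₂ * δ.2.1.1 + c₃ * δ.2.2.1.1 + c₄ * δ.2.2.2.1 = r)
      (q := fun δ : Kt p k × Kt p k × Kt p k × Kt p k =>
        c₂ * δ.1.1 + c₁ * δ.2.1.1 + c₃ * δ.2.2.1.1 + c₄ * δ.2.2.2.1 = r)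
      (⟨fun δ => (δ.2.1, δ.1, δ.2.2), fun δ => (δ.2.1, δ.1, δ.2.2),
        fun _ => rfl, fun _ => rfl⟩)
      (fun δ => by
        dsimp only [Equiv.coe_fn_mk]
        constructor <;> intro h <;> linear_combination h)
    rw [Nat.card_congr (e.trans (linear_equiv_one hc hr)), hcard]
  · have e := Equiv.subtypeEquiv (p := fun δ : Kt p k × Kt p k × Kt p k × Kt p k =>
        c₁ * δ.1.1 + c₂ * δ.2.1.1 + c₃ * δ.2.2.1.1 + c₄ * δ.2.2.2.1 = r)
      (q := fun δ : Kt p k × Kt p k × Kt p k × Kt p k =>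
        c₃ * δ.1.1 + c₂ * δ.2.1.1 + c₁ * δ.2.2.1.1 + c₄ * δ.2.2.2.1 = r)
      (⟨fun δ => (δ.2.2.1, δ.2.1, δ.1, δ.2.2.2), fun δ => (δ.2.2.1, δ.2.1, δ.1, δ.2.2.2),
        fun _ => rfl, fun _ => rfl⟩)
      (fun δ => by
        dsimp only [Equiv.coe_fn_mk]
        constructor <;> intro h <;> linear_combination h)
    rw [Nat.card_congr (e.trans (linear_equiv_one hc hr)), hcard]
  · have e := Equiv.subtypeEquiv (p := fun δ : Kt p k × Kt p k × Kt p k × Kt p k =>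
        c₁ * δ.1.1 + c₂ * δ.2.1.1 + c₃ * δ.2.2.1.1 + c₄ * δ.2.2.2.1 = r)
      (q := fun δ : Kt p k × Kt p k × Kt p k × Kt p k =>
        c₄ * δ.1.1 + c₂ * δ.2.1.1 + c₃ * δ.2.2.1.1 + c₁ * δ.2.2.2.1 = r)
      (⟨fun δ => (δ.2.2.2, δ.2.1, δ.2.2.1, δ.1), fun δ => (δ.2.2.2, δ.2.1, δ.2.2.1, δ.1),
        fun _ => rfl, fun _ => rfl⟩)
      (fun δ => by
        dsimp only [Equiv.coe_fn_mk]
        constructor <;> intro h <;> linear_combination h)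
    rw [Nat.card_congr (e.trans (linear_equiv_one hc hr)), hcard]

lemma Qf_expand (u₀ d : V (p ^ (k + 1))) (h₁ : d.1 * d.1 = 0) (h₂ : d.2.1 * d.2.1 = 0)
    (h₃ : d.2.2.1 * d.2.2.1 = 0) (h₄ : d.2.2.2 * d.2.2.2 = 0) :
    Qf (u₀.1 + d.1, u₀.2.1 + d.2.1, u₀.2.2.1 + d.2.2.1, u₀.2.2.2 + d.2.2.2) =
      Qf u₀ + (2 * u₀.1 * d.1 + 2 * u₀.2.1 * d.2.1 + 4 * u₀.2.2.1 * d.2.2.1 +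
        4 * u₀.2.2.2 * d.2.2.2) := by
  simp only [Qf]
  linear_combination h₁ + h₂ + 2 * h₃ + 2 * h₄

end Hensel2

section Hensel3

variable {p k : ℕ} [hp : Fact p.Prime]

lemma Pi4_comp (u : V (p ^ (k + 1))) {v : V (p ^ k)} (h : Pi4 p k u = v) :
    pihom p k u.1 = v.1 ∧ pihom p k u.2.1 = v.2.1 ∧ pihom p k u.2.2.1 = v.2.2.1 ∧
      pihom p k u.2.2.2 = v.2.2.2 := by
  rw [← h]
  exact ⟨rfl, rfl, rfl, rfl⟩

lemma fiber_card (hp2 : p ≠ 2) (hk : 1 ≤ k) (v : V (p ^ k)) (hQ : Qf v = 0) (hP : Prim v) :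
    Nat.card {u : V (p ^ (k + 1)) // Pi4 p k u = v ∧ Qf u = 0} = p ^ 3 := by
  haveI := NeZero_ppow (p := p) (m := k + 1)
  haveI := NeZero_ppow (p := p) (m := k)
  haveI : Fact (1 < p) := ⟨hp.out.one_lt⟩
  -- an explicit lift of `v`
  set u₀ : V (p ^ (k + 1)) := ((v.1.val : ZMod (p ^ (k + 1))), (v.2.1.val : ZMod (p ^ (k + 1))),
    (v.2.2.1.val : ZMod (p ^ (k + 1))), (v.2.2.2.val : ZMod (p ^ (k + 1)))) with hu₀def
  have hproj : ∀ a : ZMod (p ^ k), pihom p k ((a.val : ZMod (p ^ (k + 1)))) = a := by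
    intro a
    rw [map_natCast, ZMod.natCast_val, ZMod.cast_id]
  have hPi0 : Pi4 p k u₀ = v := by
    rw [Pi4, hu₀def]
    dsimp only
    rw [hproj, hproj, hproj, hproj]
  obtain ⟨hc1, hc2, hc3, hc4⟩ := Pi4_comp u₀ hPi0
  have hQu₀ : pihom p k (Qf u₀) = 0 := by rw [← Qf_Pi4, hPi0, hQ]
  have hrk : pihom p k (-(Qf u₀)) = 0 := by rw [map_neg, hQu₀, neg_zero]
  -- a unit coefficient exists
  set ρ : ZMod (p ^ (k + 1)) →+* ZMod p :=
    ZMod.castHom (dvd_pow_self p (Nat.succ_ne_zero k)) (ZMod p) with hρ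
  have h2u : IsUnit (2 : ZMod (p ^ (k + 1))) := by
    apply isUnit_of_cast_ne_zero (Nat.succ_ne_zero k)
    rw [map_ofNat]
    have hch : ringChar (ZMod p) ≠ 2 := by rw [ZMod.ringChar_zmod_n]; exact hp2
    exact Ring.two_ne_zero hch
  have h4u : IsUnit (4 : ZMod (p ^ (k + 1))) := by
    have h42 : (4 : ZMod (p ^ (k + 1))) = 2 * 2 := by norm_num
    rw [h42]
    exact h2u.mul h2u
  have hunit : IsUnit (2 * u₀.1) ∨ IsUnit (2 * u₀.2.1) ∨ IsUnit (4 * u₀.2.2.1) ∨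
      IsUnit (4 * u₀.2.2.2) := by
    have hPu₀ : Prim u₀ := prim_lift hk u₀ (by rw [hPi0]; exact hP)
    obtain ⟨x, y, z, w, hx⟩ := hPu₀
    by_contra hcon
    push_neg at hcon
    obtain ⟨h1, h2, h3, h4⟩ := hcon
    have hz1 : ρ u₀.1 = 0 := by
      by_contra hne
      exact h1 (h2u.mul (isUnit_of_cast_ne_zero (Nat.succ_ne_zero k) hne))
    have hz2 : ρ u₀.2.1 = 0 := by
      by_contra hne
      exact h2 (h2u.mul (isUnit_of_cast_ne_zero (Nat.succ_ne_zero k) hne))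
    have hz3 : ρ u₀.2.2.1 = 0 := by
      by_contra hne
      exact h3 (h4u.mul (isUnit_of_cast_ne_zero (Nat.succ_ne_zero k) hne))
    have hz4 : ρ u₀.2.2.2 = 0 := by
      by_contra hne
      exact h4 (h4u.mul (isUnit_of_cast_ne_zero (Nat.succ_ne_zero k) hne))
    have hcontr := congrArg ρ hx
    rw [map_add, map_add, map_add, map_mul, map_mul, map_mul, map_mul, map_one,
      hz1, hz2, hz3, hz4, mul_zero, mul_zero, mul_zero, mul_zero, add_zero, add_zero,
      add_zero] at hcontr
    exact one_ne_zero hcontr.symm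
  -- the equivalence with the kernel quadruples
  have E : {u : V (p ^ (k + 1)) // Pi4 p k u = v ∧ Qf u = 0} ≃
      {δ : Kt p k × Kt p k × Kt p k × Kt p k //
        (2 * u₀.1) * δ.1.1 + (2 * u₀.2.1) * δ.2.1.1 + (4 * u₀.2.2.1) * δ.2.2.1.1 +
          (4 * u₀.2.2.2) * δ.2.2.2.1 = -(Qf u₀)} := by
    refine ⟨fun u => ⟨(⟨u.1.1 - u₀.1, ?_⟩, ⟨u.1.2.1 - u₀.2.1, ?_⟩,
        ⟨u.1.2.2.1 - u₀.2.2.1, ?_⟩, ⟨u.1.2.2.2 - u₀.2.2.2, ?_⟩), ?_⟩,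
      fun δ => ⟨(u₀.1 + δ.1.1.1, u₀.2.1 + δ.1.2.1.1, u₀.2.2.1 + δ.1.2.2.1.1,
        u₀.2.2.2 + δ.1.2.2.2.1), ?_, ?_⟩, ?_, ?_⟩
    · obtain ⟨hd1, _, _, _⟩ := Pi4_comp u.1 u.2.1
      rw [map_sub, hd1, hc1, sub_self]
    · obtain ⟨_, hd2, _, _⟩ := Pi4_comp u.1 u.2.1
      rw [map_sub, hd2, hc2, sub_self]
    · obtain ⟨_, _, hd3, _⟩ := Pi4_comp u.1 u.2.1
      rw [map_sub, hd3, hc3, sub_self]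
    · obtain ⟨_, _, _, hd4⟩ := Pi4_comp u.1 u.2.1
      rw [map_sub, hd4, hc4, sub_self]
    · -- linear condition from Qf u = 0
      obtain ⟨hd1, hd2, hd3, hd4⟩ := Pi4_comp u.1 u.2.1
      have k1 : pihom p k (u.1.1 - u₀.1) = 0 := by rw [map_sub, hd1, hc1, sub_self]
      have k2 : pihom p k (u.1.2.1 - u₀.2.1) = 0 := by rw [map_sub, hd2, hc2, sub_self]
      have k3 : pihom p k (u.1.2.2.1 - u₀.2.2.1) = 0 := by rw [map_sub, hd3, hc3, sub_self]
      have k4 : pihom p k (u.1.2.2.2 - u₀.2.2.2) = 0 := by rw [map_sub, hd4, hc4, sub_self]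
      have hexp := Qf_expand u₀ (u.1.1 - u₀.1, u.1.2.1 - u₀.2.1, u.1.2.2.1 - u₀.2.2.1,
        u.1.2.2.2 - u₀.2.2.2) (ker_sq_zero hk k1 k1) (ker_sq_zero hk k2 k2)
        (ker_sq_zero hk k3 k3) (ker_sq_zero hk k4 k4)
      have harg : (u₀.1 + (u.1.1 - u₀.1), u₀.2.1 + (u.1.2.1 - u₀.2.1),
          u₀.2.2.1 + (u.1.2.2.1 - u₀.2.2.1), u₀.2.2.2 + (u.1.2.2.2 - u₀.2.2.2)) = u.1 := by
        refine Prod.ext ?_ (Prod.ext ?_ (Prod.ext ?_ ?_)) <;> dsimp only <;> ring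
      rw [harg, u.2.2] at hexp
      dsimp only
      linear_combination -hexp
    · -- Pi4 of the lift is v
      have k1 : pihom p k δ.1.1.1 = 0 := δ.1.1.2
      have k2 : pihom p k δ.1.2.1.1 = 0 := δ.1.2.1.2
      have k3 : pihom p k δ.1.2.2.1.1 = 0 := δ.1.2.2.1.2
      have k4 : pihom p k δ.1.2.2.2.1 = 0 := δ.1.2.2.2.2
      rw [Pi4]
      dsimp only
      rw [map_add, map_add, map_add, map_add, k1, k2, k3, k4, add_zero, add_zero, add_zero,
        add_zero, hc1, hc2, hc3, hc4]
    · -- Qf of the lift is 0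
      have hexp := Qf_expand u₀ (δ.1.1.1, δ.1.2.1.1, δ.1.2.2.1.1, δ.1.2.2.2.1)
        (ker_sq_zero hk δ.1.1.2 δ.1.1.2) (ker_sq_zero hk δ.1.2.1.2 δ.1.2.1.2)
        (ker_sq_zero hk δ.1.2.2.1.2 δ.1.2.2.1.2) (ker_sq_zero hk δ.1.2.2.2.2 δ.1.2.2.2.2)
      have hδ := δ.2
      rw [hexp]
      linear_combination hδ
    · intro u
      apply Subtype.ext
      refine Prod.ext ?_ (Prod.ext ?_ (Prod.ext ?_ ?_)) <;> dsimp only <;> ring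
    · intro δ
      apply Subtype.ext
      refine Prod.ext ?_ (Prod.ext ?_ (Prod.ext ?_ ?_)) <;> apply Subtype.ext <;>
        dsimp only <;> ring
  rw [Nat.card_congr E]
  exact card_linear_fiber hrk hunit

lemma f_step (hp2 : p ≠ 2) (hk : 1 ≤ k) : f (p ^ (k + 1)) = p ^ 3 * f (p ^ k) := by
  haveI := NeZero_ppow (p := p) (m := k + 1)
  haveI := NeZero_ppow (p := p) (m := k)
  rw [f, f, nat_card_eq_filter_card, nat_card_eq_filter_card]
  have hmaps : ∀ u ∈ univ.filter (fun u : V (p ^ (k + 1)) => Qf u = 0 ∧ Prim u),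
      Pi4 p k u ∈ univ.filter (fun v : V (p ^ k) => Qf v = 0 ∧ Prim v) := by
    intro u hu
    rw [Finset.mem_filter] at hu ⊢
    obtain ⟨-, hQ, hPr⟩ := hu
    refine ⟨Finset.mem_univ _, ?_, ?_⟩
    · rw [Qf_Pi4, hQ, map_zero]
    · obtain ⟨x, y, z, w, hx⟩ := hPr
      refine ⟨pihom p k x, pihom p k y, pihom p k z, pihom p k w, ?_⟩
      rw [Pi4]
      dsimp only
      rw [← map_mul, ← map_mul, ← map_mul, ← map_mul, ← map_add, ← map_add, ← map_add, hx,
        map_one]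
  rw [Finset.card_eq_sum_card_fiberwise hmaps]
  have hfib : ∀ v ∈ univ.filter (fun v : V (p ^ k) => Qf v = 0 ∧ Prim v),
      ((univ.filter (fun u : V (p ^ (k + 1)) => Qf u = 0 ∧ Prim u)).filter
        (fun u => Pi4 p k u = v)).card = p ^ 3 := by
    intro v hv
    rw [Finset.mem_filter] at hv
    obtain ⟨-, hQ, hP⟩ := hv
    have hset : (univ.filter (fun u : V (p ^ (k + 1)) => Qf u = 0 ∧ Prim u)).filter
        (fun u => Pi4 p k u = v) =
        univ.filter (fun u : V (p ^ (k + 1)) => Pi4 p k u = v ∧ Qf u = 0) := by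
      ext u
      simp only [Finset.mem_filter, Finset.mem_univ, true_and]
      constructor
      · rintro ⟨⟨h1, h2⟩, h3⟩
        exact ⟨h3, h1⟩
      · rintro ⟨h1, h2⟩
        exact ⟨⟨h2, prim_lift hk u (by rw [h1]; exact hP)⟩, h1⟩
    rw [hset, ← nat_card_eq_filter_card]
    exact fiber_card hp2 hk v hQ hP
  rw [Finset.sum_congr rfl hfib, Finset.sum_const, nsmul_eq_mul, mul_comm]
  simp

end Hensel3

lemma f_ppow (p : ℕ) [Fact p.Prime] (hp2 : p ≠ 2) (n : ℕ) (hn : 1 ≤ n) :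
    (f (p ^ n) : ℤ) * (p : ℤ) ^ 3 = (p : ℤ) ^ (3 * n) * ((p : ℤ) ^ 3 + p ^ 2 - p - 1) := by
  induction n with
  | zero => omega
  | succ m ih =>
    rcases Nat.eq_zero_or_pos m with rfl | hm
    · rw [pow_one]
      rw [f_prime hp2]
      ring
    · rw [f_step hp2 hm]
      push_cast
      have h3 : 3 * (m + 1) = 3 * m + 3 := by ring
      rw [h3, pow_add]
      have := ih hm
      linear_combination (p : ℤ) ^ 3 * this

lemma f_rat : ∀ m : ℕ, Odd m → 0 < m →
    (f m : ℚ) = (m : ℚ) ^ 3 * ∏ q ∈ m.primeFactors, (1 - 1 / (q : ℚ) ^ 2) * (1 + 1 / (q : ℚ)) := by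
  intro m
  induction m using Nat.recOnPosPrimePosCoprime with
  | prime_pow p n hpp hn =>
    intro hodd _
    haveI : Fact p.Prime := ⟨hpp⟩
    have hp2 : p ≠ 2 := by
      rintro rfl
      have heven : Even (2 ^ n) := Nat.even_pow.mpr ⟨even_two, hn.ne'⟩
      exact (Nat.not_odd_iff_even.mpr heven) hodd
    have hp0 : (p : ℚ) ≠ 0 := Nat.cast_ne_zero.mpr (hpp).pos.ne'
    have key : (f (p ^ n) : ℚ) * (p : ℚ) ^ 3 =
        (p : ℚ) ^ (3 * n) * ((p : ℚ) ^ 3 + (p : ℚ) ^ 2 - p - 1) := by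
      exact_mod_cast f_ppow p hp2 n hn
    rw [Nat.primeFactors_prime_pow hn.ne' (hpp), Finset.prod_singleton]
    apply mul_right_cancel₀ (pow_ne_zero 3 hp0)
    rw [key]
    push_cast
    field_simp
    ring
  | zero =>
    intro _ h
    exact absurd h (by norm_num)
  | one =>
    intro _ _
    rw [f_one]
    simp
  | coprime a b ha hb hab iha ihb =>
    intro hodd hpos
    rw [Nat.odd_mul] at hodd
    have hapos : 0 < a := by omega
    have hbpos : 0 < b := by omega
    rw [f_mul hab]
    push_cast
    rw [iha hodd.1 hapos, ihb hodd.2 hbpos,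
      Nat.Coprime.primeFactors_mul hab, Finset.prod_union hab.disjoint_primeFactors]
    push_cast
    ring

end CPNV

/-- For `m` odd and positive, the number of quadruples `(q₁, q₂, q₃, q₄) ∈ (ℤ/mℤ)⁴` with
`q₁² + q₂² + 2q₃² + 2q₄² = 0` in `ℤ/mℤ` that are primitive to `m`
(i.e. `gcd(q₁, q₂, q₃, q₄, m) = 1` for lifts) equals
`ψ(m) = m³·∏_{p ∣ m}(1 − 1/p²)(1 + 1/p)`. -/
theorem count_primitive_null_vectors (m : ℕ) (hm : Odd m) (hpos : 0 < m) :
    (Nat.card {q : ZMod m × ZMod m × ZMod m × ZMod m //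
        q.1 ^ 2 + q.2.1 ^ 2 + 2 * q.2.2.1 ^ 2 + 2 * q.2.2.2 ^ 2 = 0 ∧
        Nat.gcd (Nat.gcd (Nat.gcd (Nat.gcd q.1.val q.2.1.val) q.2.2.1.val) q.2.2.2.val) m
          = 1} : ℚ) =
      m ^ 3 * ∏ p ∈ m.primeFactors, (1 - 1 / (p : ℚ) ^ 2) * (1 + 1 / (p : ℚ)) := by
  haveI : NeZero m := ⟨hpos.ne'⟩
  have he : {q : ZMod m × ZMod m × ZMod m × ZMod m //
      q.1 ^ 2 + q.2.1 ^ 2 + 2 * q.2.2.1 ^ 2 + 2 * q.2.2.2 ^ 2 = 0 ∧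
      Nat.gcd (Nat.gcd (Nat.gcd (Nat.gcd q.1.val q.2.1.val) q.2.2.1.val) q.2.2.2.val) m
        = 1} ≃ {q : CPNV.V m // CPNV.Qf q = 0 ∧ CPNV.Prim q} :=
    Equiv.subtypeEquivRight fun q =>
      and_congr Iff.rfl (CPNV.gcd_eq_one_iff_prim q)
  rw [Nat.card_congr he]
  exact CPNV.f_rat m hm hpos
end

section
/- Let m be an odd positive integer. The number of quadruples (q₁, q₂, q₃, q₄) ∈ (ℤ/mℤ)⁴ such that q₁² + q₂² + 2q₃² + 2q₄² = 1 in ℤ/mℤ equals m³ · ∏_{p ∣ m} (1 − 1/p²), where the product runs over the distinct primes p dividing m. -/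
set_option linter.unusedSectionVars false

open Finset

section PrimeCount

variable {p : ℕ} [Fact p.Prime]

local notation "F" => ZMod p
local notation "χ" => quadraticChar (ZMod p)

lemma sum_sq (hF : ringChar F ≠ 2) (f : F → ℤ) :
    ∑ c : F, f (c ^ 2) = ∑ t : F, (χ t + 1) * f t := by
  classical
  rw [← Finset.sum_fiberwise univ (fun c : F => c ^ 2) (fun c => f (c ^ 2))]
  refine Finset.sum_congr rfl fun t _ => ?_
  have hcard : (((univ : Finset F).filter fun c : F => c ^ 2 = t).card : ℤ) = χ t + 1 := by
    have h := quadraticChar_card_sqrts hF t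
    rw [Set.toFinset_setOf] at h
    exact_mod_cast h
  calc ∑ c ∈ (univ : Finset F).filter (fun c : F => c ^ 2 = t), f (c ^ 2)
      = ∑ c ∈ (univ : Finset F).filter (fun c : F => c ^ 2 = t), f t :=
        Finset.sum_congr rfl fun c hc => by rw [(Finset.mem_filter.mp hc).2]
    _ = ((univ : Finset F).filter fun c : F => c ^ 2 = t).card • f t := Finset.sum_const _
    _ = (χ t + 1) * f t := by rw [nsmul_eq_mul, hcard]

lemma count_sq (hF : ringChar F ≠ 2) (s : F) :
    ∑ c : F, (if c ^ 2 = s then (1 : ℤ) else 0) = χ s + 1 := by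
  rw [sum_sq hF (fun t => if t = s then (1 : ℤ) else 0)]
  simp only [mul_ite, mul_one, mul_zero]
  rw [Finset.sum_ite_eq' univ s (fun t => χ t + 1)]
  simp

lemma K_zero : ∑ u : F, χ u * χ (0 - u) = χ (-1) * ((p : ℤ) - 1) := by
  classical
  calc ∑ u : F, χ u * χ (0 - u) = ∑ u : F, χ (-1) * (χ u) ^ 2 := by
        refine Finset.sum_congr rfl fun u _ => ?_
        rw [zero_sub, show -u = -1 * u by ring, map_mul]; ring
    _ = χ (-1) * ∑ u : F, (χ u) ^ 2 := by rw [Finset.mul_sum]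
    _ = χ (-1) * ((p : ℤ) - 1) := by
        congr 1
        have h1 : ∀ u : F, (χ u) ^ 2 = if u = 0 then 0 else 1 := fun u => by
          by_cases hu : u = 0
          · simp [hu]
          · rw [quadraticChar_sq_one hu]; simp [hu]
        rw [Finset.sum_congr rfl fun u _ => h1 u, Finset.sum_ite, Finset.sum_const,
          Finset.sum_const, Finset.filter_ne', Finset.card_erase_of_mem (Finset.mem_univ _)]
        simp only [smul_zero, nsmul_eq_mul, mul_one, zero_add, Finset.card_univ, ZMod.card]
        rw [Nat.cast_sub (Nat.Prime.one_lt (Fact.out : p.Prime)).le]; simp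

lemma K_ne (hF : ringChar F ≠ 2) (s : F) (hs : s ≠ 0) :
    ∑ u : F, χ u * χ (s - u) = - χ (-1) := by
  have hJ : jacobiSum χ χ = - χ (-1) := by
    have h1 := jacobiSum_nontrivial_inv (quadraticChar_ne_one hF)
    rwa [(quadraticChar_isQuadratic F).inv] at h1
  calc ∑ u : F, χ u * χ (s - u) = ∑ v : F, χ (s * v) * χ (s - s * v) :=
        (Fintype.sum_equiv (Equiv.mulLeft₀ s hs)
          (fun v => χ (s * v) * χ (s - s * v)) (fun u => χ u * χ (s - u))
          (fun v => rfl)).symm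
    _ = ∑ v : F, χ s ^ 2 * (χ v * χ (1 - v)) := by
        refine Finset.sum_congr rfl fun v _ => ?_
        rw [show s - s * v = s * (1 - v) by ring, map_mul, map_mul]; ring
    _ = - χ (-1) := by
        rw [← Finset.mul_sum, quadraticChar_sq_one hs, one_mul, ← hJ, jacobiSum]

lemma T2 (hF : ringChar F ≠ 2) (h2 : (2 : F) ≠ 0) (s : F) :
    ∑ c : F, χ (s - 2 * c ^ 2) = χ 2⁻¹ * ∑ u : F, χ u * χ (s - u) := by
  rw [sum_sq hF (fun t => χ (s - 2 * t))]
  simp_rw [add_mul, one_mul]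
  rw [Finset.sum_add_distrib]
  have e1 : ∑ t : F, χ (s - 2 * t) = ∑ w : F, χ w :=
    Fintype.sum_equiv ((Equiv.mulLeft₀ 2 h2).trans (Equiv.subLeft s))
      (fun t => χ (s - 2 * t)) (fun w => χ w) (fun t => rfl)
  rw [e1, quadraticChar_sum_zero hF, add_zero]
  have e2 : ∑ t : F, χ t * χ (s - 2 * t)
      = ∑ u : F, χ (2⁻¹ * u) * χ (s - 2 * (2⁻¹ * u)) :=
    (Fintype.sum_equiv (Equiv.mulLeft₀ 2⁻¹ (inv_ne_zero h2))
      (fun u => χ (2⁻¹ * u) * χ (s - 2 * (2⁻¹ * u)))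
      (fun t => χ t * χ (s - 2 * t)) (fun u => rfl)).symm
  rw [e2, Finset.mul_sum]
  refine Finset.sum_congr rfl fun u _ => ?_
  rw [show (2 : F) * (2⁻¹ * u) = u by field_simp, map_mul, mul_assoc]

lemma T1 (hF : ringChar F ≠ 2) (s : F) :
    ∑ a : F, χ (s - a ^ 2) = ∑ u : F, χ u * χ (s - u) := by
  rw [sum_sq hF (fun t => χ (s - t))]
  simp_rw [add_mul, one_mul]
  rw [Finset.sum_add_distrib]
  have e1 : ∑ t : F, χ (s - t) = ∑ w : F, χ w :=
    Fintype.sum_equiv (Equiv.subLeft s) (fun t => χ (s - t)) (fun w => χ w) (fun t => rfl)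
  rw [e1, quadraticChar_sum_zero hF, add_zero]

lemma K_val (hF : ringChar F ≠ 2) (s : F) :
    ∑ u : F, χ u * χ (s - u) = -χ (-1) + (if s = 0 then χ (-1) * (p : ℤ) else 0) := by
  by_cases hs : s = 0
  · rw [if_pos hs, hs, K_zero]; ring
  · rw [if_neg hs, K_ne hF s hs]; ring

theorem card_sols_prime (hp2 : p ≠ 2) :
    (((univ : Finset (F × F × F × F)).filter fun q =>
      q.1 ^ 2 + q.2.1 ^ 2 + 2 * q.2.2.1 ^ 2 + 2 * q.2.2.2 ^ 2 = 1).card : ℤ)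
      = (p : ℤ) ^ 3 - p := by
  classical
  have hF : ringChar F ≠ 2 := by rw [ZMod.ringChar_zmod_n]; exact hp2
  have h2 : (2 : F) ≠ 0 := by
    have h : ¬ ((2 : ℕ) : F) = 0 := by
      rw [ZMod.natCast_eq_zero_iff]
      intro h
      exact hp2 ((Nat.prime_dvd_prime_iff_eq Fact.out Nat.prime_two).mp h)
    exact_mod_cast h
  have hm1 : ((-1 : F)) ≠ 0 := by
    intro h; exact one_ne_zero (α := F) (neg_eq_zero.mp h)
  have hchi2 : χ 2⁻¹ * χ 2⁻¹ = 1 := by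
    rw [← sq]; exact quadraticChar_sq_one (inv_ne_zero h2)
  have hchim1 : χ (-1) * χ (-1) = 1 := by
    rw [← sq]; exact quadraticChar_sq_one hm1
  -- turn card into a sum of indicators
  rw [Finset.card_filter]
  push_cast
  rw [Fintype.sum_prod_type]
  -- innermost sum over d
  have inner : ∀ a b c : F,
      ∑ d : F, (if a ^ 2 + b ^ 2 + 2 * c ^ 2 + 2 * d ^ 2 = 1 then (1 : ℤ) else 0)
        = χ (2⁻¹ * (1 - a ^ 2 - b ^ 2 - 2 * c ^ 2)) + 1 := by
    intro a b c
    have he : ∀ d : F, (a ^ 2 + b ^ 2 + 2 * c ^ 2 + 2 * d ^ 2 = 1)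
        ↔ (d ^ 2 = 2⁻¹ * (1 - a ^ 2 - b ^ 2 - 2 * c ^ 2)) := by
      intro d
      rw [inv_mul_eq_div, eq_div_iff h2]
      constructor <;> intro h <;> linear_combination h
    simp_rw [he]
    exact count_sq hF _
  -- sum over c
  have levelc : ∀ a b : F,
      ∑ c : F, (χ (2⁻¹ * (1 - a ^ 2 - b ^ 2 - 2 * c ^ 2)) + 1)
        = (p : ℤ) + ∑ u : F, χ u * χ ((1 - a ^ 2 - b ^ 2) - u) := by
    intro a b
    rw [Finset.sum_add_distrib, Finset.sum_const, Finset.card_univ, ZMod.card,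
      nsmul_eq_mul, mul_one]
    have h3 : ∀ c : F, χ (2⁻¹ * (1 - a ^ 2 - b ^ 2 - 2 * c ^ 2))
        = χ 2⁻¹ * χ ((1 - a ^ 2 - b ^ 2) - 2 * c ^ 2) := fun c => by
      rw [← map_mul]
    rw [Finset.sum_congr rfl fun c _ => h3 c, ← Finset.mul_sum, T2 hF h2,
      ← mul_assoc, hchi2, one_mul, add_comm]
  -- sum over b
  have levelb : ∀ a : F,
      ∑ b : F, ((p : ℤ) + ∑ u : F, χ u * χ ((1 - a ^ 2 - b ^ 2) - u))
        = (p : ℤ) ^ 2 - χ (-1) * p + χ (-1) * p * (χ (1 - a ^ 2) + 1) := by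
    intro a
    rw [Finset.sum_add_distrib, Finset.sum_const, Finset.card_univ, ZMod.card,
      nsmul_eq_mul]
    have h4 : ∀ b : F, (∑ u : F, χ u * χ ((1 - a ^ 2 - b ^ 2) - u))
        = -χ (-1) + (if b ^ 2 = 1 - a ^ 2 then χ (-1) * (p : ℤ) else 0) := by
      intro b
      rw [K_val hF]
      congr 2
      rw [eq_iff_iff]
      constructor
      · intro h; linear_combination -h
      · intro h; linear_combination -h
    rw [Finset.sum_congr rfl fun b _ => h4 b, Finset.sum_add_distrib, Finset.sum_const,
      Finset.card_univ, ZMod.card, nsmul_eq_mul]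
    have h5 : ∑ b : F, (if b ^ 2 = 1 - a ^ 2 then χ (-1) * (p : ℤ) else 0)
        = χ (-1) * (p : ℤ) * (χ (1 - a ^ 2) + 1) := by
      have h6 : ∀ b : F, (if b ^ 2 = 1 - a ^ 2 then χ (-1) * (p : ℤ) else 0)
          = χ (-1) * (p : ℤ) * (if b ^ 2 = 1 - a ^ 2 then (1 : ℤ) else 0) := fun b => by
        split <;> ring
      rw [Finset.sum_congr rfl fun b _ => h6 b, ← Finset.mul_sum, count_sq hF]
    rw [h5]
    ring
  -- sum over a
  have levela : ∑ a : F, ((p : ℤ) ^ 2 - χ (-1) * p + χ (-1) * p * (χ (1 - a ^ 2) + 1))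
      = (p : ℤ) ^ 3 - p := by
    rw [Finset.sum_add_distrib, Finset.sum_const, Finset.card_univ, ZMod.card, nsmul_eq_mul]
    have h7 : ∑ a : F, χ (-1) * (p : ℤ) * (χ (1 - a ^ 2) + 1)
        = χ (-1) * (p : ℤ) * (∑ a : F, χ (1 - a ^ 2) + p) := by
      simp_rw [mul_add, mul_one]
      rw [Finset.sum_add_distrib, ← Finset.mul_sum, Finset.sum_const, Finset.card_univ,
        ZMod.card, nsmul_eq_mul]
      ring
    rw [h7, T1 hF, K_ne hF 1 one_ne_zero]
    linear_combination (-(p : ℤ)) * hchim1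
  calc ∑ a : F, ∑ q : F × F × F,
        (if a ^ 2 + q.1 ^ 2 + 2 * q.2.1 ^ 2 + 2 * q.2.2 ^ 2 = 1 then (1 : ℤ) else 0)
      = ∑ a : F, ∑ b : F, ∑ c : F, (χ (2⁻¹ * (1 - a ^ 2 - b ^ 2 - 2 * c ^ 2)) + 1) := by
        refine Finset.sum_congr rfl fun a _ => ?_
        rw [Fintype.sum_prod_type]
        refine Finset.sum_congr rfl fun b _ => ?_
        rw [Fintype.sum_prod_type]
        exact Finset.sum_congr rfl fun c _ => inner a b c
    _ = (p : ℤ) ^ 3 - p := by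
        rw [Finset.sum_congr rfl fun a _ => by
          rw [Finset.sum_congr rfl fun b _ => levelc a b, levelb a]]
        exact levela

end PrimeCount

section QFdef

/-- The quadratic form. -/
def QF {R : Type*} [CommRing R] (q : R × R × R × R) : R :=
  q.1 ^ 2 + q.2.1 ^ 2 + 2 * q.2.2.1 ^ 2 + 2 * q.2.2.2 ^ 2

def map4 {R S : Type*} (f : R → S) (q : R × R × R × R) : S × S × S × S :=
  (f q.1, f q.2.1, f q.2.2.1, f q.2.2.2)

lemma QF_map4 {R S : Type*} [CommRing R] [CommRing S] (f : R →+* S) (q : R × R × R × R) :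
    QF (map4 (⇑f) q) = f (QF q) := by
  simp only [QF, map4, map_add, map_mul, map_pow, map_ofNat]

end QFdef

section Linear

variable {K : Type*} [Field K] [Fintype K] [DecidableEq K]

def linMap (α v : K × K × K × K) : K :=
  α.1 * v.1 + α.2.1 * v.2.1 + α.2.2.1 * v.2.2.1 + α.2.2.2 * v.2.2.2

lemma linMap_add (α v w : K × K × K × K) : linMap α (v + w) = linMap α v + linMap α w := by
  simp only [linMap, Prod.fst_add, Prod.snd_add]; ring

lemma linMap_sub (α v w : K × K × K × K) : linMap α (v - w) = linMap α v - linMap α w := by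
  simp only [linMap, Prod.fst_sub, Prod.snd_sub]; ring

lemma linMap_surj (α : K × K × K × K)
    (h : α.1 ≠ 0 ∨ α.2.1 ≠ 0 ∨ α.2.2.1 ≠ 0 ∨ α.2.2.2 ≠ 0) :
    Function.Surjective (linMap α) := by
  intro w
  rcases h with h | h | h | h
  · exact ⟨(α.1⁻¹ * w, 0, 0, 0), by simp [linMap, h]⟩
  · exact ⟨(0, α.2.1⁻¹ * w, 0, 0), by simp [linMap, h]⟩
  · exact ⟨(0, 0, α.2.2.1⁻¹ * w, 0), by simp [linMap, h]⟩
  · exact ⟨(0, 0, 0, α.2.2.2⁻¹ * w), by simp [linMap, h]⟩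

open Finset in
lemma card_linMap_fiber (α : K × K × K × K)
    (h : α.1 ≠ 0 ∨ α.2.1 ≠ 0 ∨ α.2.2.1 ≠ 0 ∨ α.2.2.2 ≠ 0) (β : K) :
    ((univ : Finset (K × K × K × K)).filter fun v => linMap α v = β).card
      = Fintype.card K ^ 3 := by
  classical
  have key : ∀ β' : K,
      ((univ : Finset (K × K × K × K)).filter fun v => linMap α v = β').card
        = ((univ : Finset (K × K × K × K)).filter fun v => linMap α v = β).card := by
    intro β'
    obtain ⟨d, hd⟩ := linMap_surj α h (β - β')
    refine Finset.card_nbij' (fun v => v + d) (fun v => v - d) ?_ ?_ ?_ ?_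
    · intro a ha
      simp only [Finset.mem_coe, Finset.mem_filter] at ha ⊢
      refine ⟨Finset.mem_univ _, ?_⟩
      rw [linMap_add, ha.2, hd]; ring
    · intro a ha
      simp only [Finset.mem_coe, Finset.mem_filter] at ha ⊢
      refine ⟨Finset.mem_univ _, ?_⟩
      rw [linMap_sub, ha.2, hd]; ring
    · intro a _; exact add_sub_cancel_right a d
    · intro a _; exact sub_add_cancel a d
  have htot : (Fintype.card K) ^ 4
      = ∑ β' : K, ((univ : Finset (K × K × K × K)).filter fun v => linMap α v = β').card := by
    rw [← Finset.card_eq_sum_card_fiberwise (fun x _ => Finset.mem_univ (linMap α x))]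
    simp only [Finset.card_univ, Fintype.card_prod]
    ring
  rw [Finset.sum_congr rfl fun β' _ => key β', Finset.sum_const, Finset.card_univ,
    smul_eq_mul] at htot
  have hpos : 0 < Fintype.card K := Fintype.card_pos
  have : Fintype.card K * Fintype.card K ^ 3 = Fintype.card K *
      ((univ : Finset (K × K × K × K)).filter fun v => linMap α v = β).card := by
    rw [← htot]; ring
  exact (Nat.eq_of_mul_eq_mul_left hpos this).symm

end Linear

section Lift

open Finset

variable {p : ℕ} [Fact p.Prime]

lemma card_sols_lift (hp2 : p ≠ 2) (n : ℕ) (hn : 1 ≤ n) :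
    ((univ : Finset (ZMod (p ^ (n + 1)) × ZMod (p ^ (n + 1)) × ZMod (p ^ (n + 1)) ×
        ZMod (p ^ (n + 1)))).filter fun q => QF q = 1).card
      = p ^ 3 * ((univ : Finset (ZMod (p ^ n) × ZMod (p ^ n) × ZMod (p ^ n) ×
        ZMod (p ^ n))).filter fun q => QF q = 1).card := by
  classical
  haveI : NeZero p := ⟨(Fact.out : p.Prime).ne_zero⟩
  set A := ZMod (p ^ (n + 1)) with hA
  set B := ZMod (p ^ n) with hB
  set K := ZMod p with hK
  let π : A →+* B := ZMod.castHom (pow_dvd_pow p (Nat.le_succ n)) B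
  let ρ : A →+* K := ZMod.castHom (dvd_pow_self p (Nat.succ_ne_zero n)) K
  -- basic facts
  have hπval : ∀ e : A, π e = ((e.val : ℕ) : B) := fun e => by
    rw [ZMod.castHom_apply, ← ZMod.natCast_val]
  have hρval : ∀ e : A, ρ e = ((e.val : ℕ) : K) := fun e => by
    rw [ZMod.castHom_apply, ← ZMod.natCast_val]
  have hcast_self : ∀ e : A, ((e.val : ℕ) : A) = e := fun e => by
    rw [ZMod.natCast_val, ZMod.cast_id]
  have hcastK : ∀ w : K, ((w.val : ℕ) : K) = w := fun w => by
    rw [ZMod.natCast_val, ZMod.cast_id]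
  have hcastB : ∀ y : B, ((y.val : ℕ) : B) = y := fun y => by
    rw [ZMod.natCast_val, ZMod.cast_id]
  have fact5 : ((p : A)) ^ (n + 1) = 0 := by
    rw [← Nat.cast_pow, ZMod.natCast_self]
  have hπnat : ∀ y : B, π ((y.val : ℕ) : A) = y := fun y => by
    rw [map_natCast, hcastB]
  have fact4 : ∀ w : K, ρ ((w.val : ℕ) : A) = w := fun w => by
    rw [map_natCast, hcastK]
  have fact1 : ∀ e : A, π e = 0 → e = (p : A) ^ n * ((e.val / p ^ n : ℕ) : A) := by
    intro e he
    rw [hπval] at he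
    have hdvd : p ^ n ∣ e.val := by
      have := (ZMod.natCast_eq_zero_iff e.val (p ^ n)).mp he
      exact this
    calc e = ((e.val : ℕ) : A) := (hcast_self e).symm
      _ = ((p ^ n * (e.val / p ^ n) : ℕ) : A) := by rw [Nat.mul_div_cancel' hdvd]
      _ = (p : A) ^ n * ((e.val / p ^ n : ℕ) : A) := by push_cast; ring
  have fact2 : ∀ c : ℕ, ((p : A) ^ n * (c : A) = 0) ↔ p ∣ c := by
    intro c
    have h1 : (p : A) ^ n * (c : A) = ((p ^ n * c : ℕ) : A) := by rw [Nat.cast_mul, Nat.cast_pow]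
    rw [h1, ZMod.natCast_eq_zero_iff, pow_succ]
    exact Nat.mul_dvd_mul_iff_left (pow_pos (Fact.out : p.Prime).pos n)
  have fact3 : ∀ a : A, ((p : A) ^ n * a = 0 ↔ ρ a = 0) := by
    intro a
    rw [show (p : A) ^ n * a = (p : A) ^ n * ((a.val : ℕ) : A) by rw [hcast_self],
      fact2, hρval, ZMod.natCast_eq_zero_iff]
  have fact6 : ∀ a b : A, ((p : A) ^ n * a = (p : A) ^ n * b ↔ ρ a = ρ b) := by
    intro a b
    rw [← sub_eq_zero, ← mul_sub, fact3, map_sub, sub_eq_zero]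
  have hπkill : ∀ a : A, π ((p : A) ^ n * a) = 0 := by
    intro a
    have hpB : ((p : B)) ^ n = 0 := by rw [← Nat.cast_pow, ZMod.natCast_self]
    rw [map_mul, map_pow, map_natCast, hpB, zero_mul]
  have hpsq : ((p : A) ^ n) ^ 2 = 0 := by
    have h1 : ((p : A) ^ n) ^ 2 = (p : A) ^ (n + 1) * (p : A) ^ (n - 1) := by
      rw [← pow_add, ← pow_mul]
      congr 1
      omega
    rw [h1, fact5, zero_mul]
  have h2K : (2 : K) ≠ 0 := by
    have h : ¬ ((2 : ℕ) : K) = 0 := by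
      rw [ZMod.natCast_eq_zero_iff]
      intro h
      exact hp2 ((Nat.prime_dvd_prime_iff_eq Fact.out Nat.prime_two).mp h)
    exact_mod_cast h
  have h4K : (4 : K) ≠ 0 := by
    have : (4 : K) = 2 * 2 := by norm_num
    rw [this]
    exact mul_ne_zero h2K h2K
  -- main fiberwise count
  have Hmaps : ∀ x ∈ ((univ : Finset (A × A × A × A)).filter fun q => QF q = 1),
      map4 (⇑π) x ∈ ((univ : Finset (B × B × B × B)).filter fun q => QF q = 1) := by
    intro x hx
    rw [Finset.mem_filter] at hx ⊢
    exact ⟨Finset.mem_univ _, by rw [QF_map4, hx.2, map_one]⟩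
  rw [Finset.card_eq_sum_card_fiberwise Hmaps]
  rw [Finset.sum_const_nat (m := p ^ 3) ?_, mul_comm]
  intro y hy
  rw [Finset.mem_filter] at hy
  have hQy : QF y = 1 := hy.2
  -- the lift of y
  set a1 : A := ((y.1.val : ℕ) : A) with ha1
  set a2 : A := ((y.2.1.val : ℕ) : A) with ha2
  set a3 : A := ((y.2.2.1.val : ℕ) : A) with ha3
  set a4 : A := ((y.2.2.2.val : ℕ) : A) with ha4
  have hπx : map4 (⇑π) (a1, a2, a3, a4) = y := by
    simp only [map4, ha1, ha2, ha3, ha4, hπnat]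
  have hQπ : π (QF (a1, a2, a3, a4)) = 1 := by
    rw [← QF_map4, hπx, hQy]
  have hπe : π (QF (a1, a2, a3, a4) - 1) = 0 := by
    rw [map_sub, hQπ, map_one, sub_self]
  set cA : A := (((QF (a1, a2, a3, a4) - 1).val / p ^ n : ℕ) : A) with hcA
  have hc : QF (a1, a2, a3, a4) = 1 + (p : A) ^ n * cA := by
    have := fact1 _ hπe
    rw [← hcA] at this
    linear_combination this
  -- membership translation
  have hmem : ∀ v : K × K × K × K,
      QF (a1 + (p : A) ^ n * ((v.1.val : ℕ) : A),
          a2 + (p : A) ^ n * ((v.2.1.val : ℕ) : A),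
          a3 + (p : A) ^ n * ((v.2.2.1.val : ℕ) : A),
          a4 + (p : A) ^ n * ((v.2.2.2.val : ℕ) : A)) = 1
        ↔ linMap (2 * ρ a1, 2 * ρ a2, 4 * ρ a3, 4 * ρ a4) v = - ρ cA := by
    intro v
    have expand : QF (a1 + (p : A) ^ n * ((v.1.val : ℕ) : A),
          a2 + (p : A) ^ n * ((v.2.1.val : ℕ) : A),
          a3 + (p : A) ^ n * ((v.2.2.1.val : ℕ) : A),
          a4 + (p : A) ^ n * ((v.2.2.2.val : ℕ) : A))
        = QF (a1, a2, a3, a4)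
          + (p : A) ^ n * (2 * a1 * ((v.1.val : ℕ) : A) + 2 * a2 * ((v.2.1.val : ℕ) : A)
            + 4 * a3 * ((v.2.2.1.val : ℕ) : A) + 4 * a4 * ((v.2.2.2.val : ℕ) : A))
          + ((p : A) ^ n) ^ 2 * QF (((v.1.val : ℕ) : A), ((v.2.1.val : ℕ) : A),
            ((v.2.2.1.val : ℕ) : A), ((v.2.2.2.val : ℕ) : A)) := by
      simp only [QF]
      ring
    rw [expand, hpsq, zero_mul, add_zero, hc]
    have h0 : (1 + (p : A) ^ n * cA + (p : A) ^ n * (2 * a1 * ((v.1.val : ℕ) : A)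
          + 2 * a2 * ((v.2.1.val : ℕ) : A) + 4 * a3 * ((v.2.2.1.val : ℕ) : A)
          + 4 * a4 * ((v.2.2.2.val : ℕ) : A)) = 1)
        ↔ ((p : A) ^ n * (cA + (2 * a1 * ((v.1.val : ℕ) : A) + 2 * a2 * ((v.2.1.val : ℕ) : A)
          + 4 * a3 * ((v.2.2.1.val : ℕ) : A) + 4 * a4 * ((v.2.2.2.val : ℕ) : A))) = 0) := by
      constructor <;> intro h <;> linear_combination h
    rw [h0, fact3, map_add]
    have hρD : ρ (2 * a1 * ((v.1.val : ℕ) : A) + 2 * a2 * ((v.2.1.val : ℕ) : A)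
          + 4 * a3 * ((v.2.2.1.val : ℕ) : A) + 4 * a4 * ((v.2.2.2.val : ℕ) : A))
        = linMap (2 * ρ a1, 2 * ρ a2, 4 * ρ a3, 4 * ρ a4) v := by
      simp only [map_add, map_mul, map_ofNat, fact4, linMap]
    rw [hρD]
    constructor <;> intro h <;> linear_combination h
  -- nondegeneracy
  have hα : (2 * ρ a1 : K) ≠ 0 ∨ (2 * ρ a2 : K) ≠ 0 ∨ (4 * ρ a3 : K) ≠ 0
      ∨ (4 * ρ a4 : K) ≠ 0 := by
    by_contra hcon
    push_neg at hcon
    obtain ⟨h1, h2, h3, h4⟩ := hcon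
    have e1 : ρ a1 = 0 := (mul_eq_zero.mp h1).resolve_left h2K
    have e2 : ρ a2 = 0 := (mul_eq_zero.mp h2).resolve_left h2K
    have e3 : ρ a3 = 0 := (mul_eq_zero.mp h3).resolve_left h4K
    have e4 : ρ a4 = 0 := (mul_eq_zero.mp h4).resolve_left h4K
    have hz : ρ (QF (a1, a2, a3, a4)) = 0 := by
      rw [← QF_map4]
      simp only [map4, e1, e2, e3, e4, QF]
      ring
    rw [hc, map_add, map_one, map_mul, map_pow, map_natCast, ZMod.natCast_self,
      zero_pow (by omega : n ≠ 0), zero_mul, add_zero] at hz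
    exact one_ne_zero hz
  -- the bijection with the linear fiber
  have hlin := card_linMap_fiber (2 * ρ a1, 2 * ρ a2, 4 * ρ a3, 4 * ρ a4) hα (- ρ cA)
  have hcomp : ∀ (xi : A) (yi : B), π xi = yi →
      ((yi.val : ℕ) : A) + (p : A) ^ n
        * (((((xi - ((yi.val : ℕ) : A)).val / p ^ n : ℕ) : K).val : ℕ) : A) = xi := by
    intro xi yi hxi
    have hπe' : π (xi - ((yi.val : ℕ) : A)) = 0 := by
      rw [map_sub, hxi, hπnat, sub_self]
    have h1 : (p : A) ^ n * (((((xi - ((yi.val : ℕ) : A)).val / p ^ n : ℕ) : K).val : ℕ) : A)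
        = (p : A) ^ n * (((xi - ((yi.val : ℕ) : A)).val / p ^ n : ℕ) : A) := by
      rw [fact6, fact4, map_natCast]
    rw [h1, ← fact1 _ hπe']
    ring
  have hcomp2 : ∀ (xi : A) (w : K),
      ((((xi + (p : A) ^ n * ((w.val : ℕ) : A) - xi).val / p ^ n : ℕ)) : K) = w := by
    intro xi w
    have h1 : xi + (p : A) ^ n * ((w.val : ℕ) : A) - xi = ((p ^ n * w.val : ℕ) : A) := by
      push_cast
      ring
    rw [h1, ZMod.val_cast_of_lt, Nat.mul_div_cancel_left _ (pow_pos (Fact.out : p.Prime).pos n),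
      hcastK]
    calc p ^ n * w.val < p ^ n * p := by
          exact (Nat.mul_lt_mul_left (pow_pos (Fact.out : p.Prime).pos n)).mpr (ZMod.val_lt w)
      _ = p ^ (n + 1) := by rw [pow_succ]
  rw [show (p : ℕ) ^ 3 = Fintype.card K ^ 3 by rw [ZMod.card], ← hlin]
  refine Finset.card_nbij'
    (fun x => (((((x.1 - a1).val / p ^ n : ℕ) : K)),
               ((((x.2.1 - a2).val / p ^ n : ℕ) : K)),
               ((((x.2.2.1 - a3).val / p ^ n : ℕ) : K)),
               ((((x.2.2.2 - a4).val / p ^ n : ℕ) : K))))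
    (fun v => (a1 + (p : A) ^ n * ((v.1.val : ℕ) : A),
               a2 + (p : A) ^ n * ((v.2.1.val : ℕ) : A),
               a3 + (p : A) ^ n * ((v.2.2.1.val : ℕ) : A),
               a4 + (p : A) ^ n * ((v.2.2.2.val : ℕ) : A))) ?_ ?_ ?_ ?_
  · -- forward: fiber → linear solutions
    intro x hx
    simp only [Finset.mem_coe, Finset.mem_filter, Finset.mem_univ, true_and] at hx ⊢
    obtain ⟨hQx, hπx4⟩ := hx
    have hp1 : π x.1 = y.1 := congrArg Prod.fst hπx4
    have hp2 : π x.2.1 = y.2.1 := congrArg (fun z => z.2.1) hπx4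
    have hp3 : π x.2.2.1 = y.2.2.1 := congrArg (fun z => z.2.2.1) hπx4
    have hp4 : π x.2.2.2 = y.2.2.2 := congrArg (fun z => z.2.2.2) hπx4
    apply (hmem _).mp
    rw [hcomp _ _ hp1, hcomp _ _ hp2, hcomp _ _ hp3, hcomp _ _ hp4]
    exact hQx
  · -- backward: linear solutions → fiber
    intro v hv
    simp only [Finset.mem_coe, Finset.mem_filter, Finset.mem_univ, true_and] at hv ⊢
    constructor
    · exact (hmem v).mpr hv
    · have hk : ∀ (w : K) (ai : A) (yi : B), π ai = yi →
          π (ai + (p : A) ^ n * ((w.val : ℕ) : A)) = yi := by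
        intro w ai yi hai
        rw [map_add, hπkill, add_zero, hai]
      have hy1 : π a1 = y.1 := hπnat y.1
      have hy2 : π a2 = y.2.1 := hπnat y.2.1
      have hy3 : π a3 = y.2.2.1 := hπnat y.2.2.1
      have hy4 : π a4 = y.2.2.2 := hπnat y.2.2.2
      simp only [map4]
      exact Prod.ext (hk _ _ _ hy1) (Prod.ext (hk _ _ _ hy2)
        (Prod.ext (hk _ _ _ hy3) (hk _ _ _ hy4)))
  · -- left inverse
    intro x hx
    simp only [Finset.mem_coe, Finset.mem_filter, Finset.mem_univ, true_and] at hx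
    obtain ⟨hQx, hπx4⟩ := hx
    have hp1 : π x.1 = y.1 := congrArg Prod.fst hπx4
    have hp2 : π x.2.1 = y.2.1 := congrArg (fun z => z.2.1) hπx4
    have hp3 : π x.2.2.1 = y.2.2.1 := congrArg (fun z => z.2.2.1) hπx4
    have hp4 : π x.2.2.2 = y.2.2.2 := congrArg (fun z => z.2.2.2) hπx4
    exact Prod.ext (hcomp _ _ hp1) (Prod.ext (hcomp _ _ hp2)
      (Prod.ext (hcomp _ _ hp3) (hcomp _ _ hp4)))
  · -- right inverse
    intro v hv
    exact Prod.ext (hcomp2 _ _) (Prod.ext (hcomp2 _ _) (Prod.ext (hcomp2 _ _) (hcomp2 _ _)))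

end Lift

section CRT

open Finset

lemma QF_pair {R S : Type*} [CommRing R] [CommRing S]
    (z : (R × S) × (R × S) × (R × S) × (R × S)) :
    QF z = (QF (z.1.1, z.2.1.1, z.2.2.1.1, z.2.2.2.1),
            QF (z.1.2, z.2.1.2, z.2.2.1.2, z.2.2.2.2)) := by
  refine Prod.ext ?_ ?_ <;> simp [QF]

lemma natCard_eq_filter (m : ℕ) [NeZero m] :
    Nat.card {q : ZMod m × ZMod m × ZMod m × ZMod m // QF q = 1}
      = ((univ : Finset (ZMod m × ZMod m × ZMod m × ZMod m)).filter fun q => QF q = 1).card := by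
  classical
  rw [Nat.card_eq_fintype_card, Fintype.card_subtype]

lemma card_sols_mul {a b : ℕ} [NeZero a] [NeZero b] (h : Nat.Coprime a b) :
    Nat.card {q : ZMod (a * b) × ZMod (a * b) × ZMod (a * b) × ZMod (a * b) // QF q = 1}
      = Nat.card {q : ZMod a × ZMod a × ZMod a × ZMod a // QF q = 1}
        * Nat.card {q : ZMod b × ZMod b × ZMod b × ZMod b // QF q = 1} := by
  let e := ZMod.chineseRemainder h
  let E : (ZMod (a * b) × ZMod (a * b) × ZMod (a * b) × ZMod (a * b))
      ≃ ((ZMod a × ZMod a × ZMod a × ZMod a) × (ZMod b × ZMod b × ZMod b × ZMod b)) :=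
    { toFun := fun q => (((e q.1).1, (e q.2.1).1, (e q.2.2.1).1, (e q.2.2.2).1),
                         ((e q.1).2, (e q.2.1).2, (e q.2.2.1).2, (e q.2.2.2).2))
      invFun := fun z => (e.symm (z.1.1, z.2.1), e.symm (z.1.2.1, z.2.2.1),
                          e.symm (z.1.2.2.1, z.2.2.2.1), e.symm (z.1.2.2.2, z.2.2.2.2))
      left_inv := fun q => by simp
      right_inv := fun z => by simp }
  have hiff : ∀ q : ZMod (a * b) × ZMod (a * b) × ZMod (a * b) × ZMod (a * b),
      QF q = 1 ↔ (QF (E q).1 = 1 ∧ QF (E q).2 = 1) := by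
    intro q
    have h1 : QF q = 1 ↔ e (QF q) = 1 := by
      constructor
      · intro hq; rw [hq, map_one]
      · intro hq; exact e.injective (by rw [hq, map_one])
    have h2 : e (QF q) = QF (map4 (⇑e) q) := by
      exact (QF_map4 (e : ZMod (a*b) →+* ZMod a × ZMod b) q).symm
    rw [h1, h2, QF_pair]
    constructor
    · intro hq
      exact ⟨congrArg Prod.fst hq, congrArg Prod.snd hq⟩
    · intro hq
      exact Prod.ext hq.1 hq.2
  rw [Nat.card_congr ((Equiv.subtypeEquiv (p := fun q => QF q = 1)
    (q := fun z => QF z.1 = 1 ∧ QF z.2 = 1) E hiff).trans (Equiv.subtypeProdEquivProd (p := fun x => QF x = 1) (q := fun x => QF x = 1))),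
    Nat.card_prod]

end CRT

section Assembly

open Finset

lemma card_sols_prime_pow (p : ℕ) [Fact p.Prime] (hp2 : p ≠ 2) (k : ℕ) (hk : 1 ≤ k) :
    (Nat.card {q : ZMod (p ^ k) × ZMod (p ^ k) × ZMod (p ^ k) × ZMod (p ^ k) // QF q = 1} : ℤ)
      = (p : ℤ) ^ (3 * k) - (p : ℤ) ^ (3 * k - 2) := by
  haveI : NeZero p := ⟨(Fact.out : p.Prime).ne_zero⟩
  induction k, hk using Nat.le_induction with
  | base =>
      rw [pow_one]
      rw [natCard_eq_filter p]
      have key : ((univ : Finset (ZMod p × ZMod p × ZMod p × ZMod p)).filter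
          fun q => QF q = 1)
          = ((univ : Finset (ZMod p × ZMod p × ZMod p × ZMod p)).filter
          fun q => q.1 ^ 2 + q.2.1 ^ 2 + 2 * q.2.2.1 ^ 2 + 2 * q.2.2.2 ^ 2 = 1) := rfl
      rw [key, card_sols_prime hp2]
      norm_num
  | succ k hk ih =>
      have hlift := card_sols_lift (p := p) hp2 k hk
      rw [natCard_eq_filter, hlift]
      push_cast
      rw [← natCard_eq_filter (p ^ k), ih]
      have e1 : 3 * (k + 1) = 3 * k + 3 := by ring
      have e2 : 3 * k + 3 - 2 = (3 * k - 2) + 3 := by omega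
      rw [e1, e2, pow_add, pow_add]
      ring

end Assembly

/-- For `m` odd and positive, the number of quadruples `(q₁, q₂, q₃, q₄) ∈ (ℤ/mℤ)⁴` with
`q₁² + q₂² + 2q₃² + 2q₄² = 1` in `ℤ/mℤ` equals `m³·∏_{p ∣ m}(1 − 1/p²)`. -/
theorem count_norm_one_vectors (m : ℕ) (hm : Odd m) (hpos : 0 < m) :
    (Nat.card {q : ZMod m × ZMod m × ZMod m × ZMod m //
        q.1 ^ 2 + q.2.1 ^ 2 + 2 * q.2.2.1 ^ 2 + 2 * q.2.2.2 ^ 2 = 1} : ℚ) =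
      m ^ 3 * ∏ p ∈ m.primeFactors, (1 - 1 / (p : ℚ) ^ 2) := by
  revert hm hpos
  induction m using Nat.recOnPosPrimePosCoprime with
  | prime_pow p k hprime hkpos =>
      intro hodd _
      haveI : Fact p.Prime := ⟨hprime⟩
      have hp2 : p ≠ 2 := by
        rintro rfl
        rw [Nat.odd_iff] at hodd
        obtain ⟨c, hc⟩ := dvd_pow_self 2 (by omega : k ≠ 0)
        omega
      have hZ := card_sols_prime_pow p hp2 k hkpos
      have hQcast : (Nat.card {q : ZMod (p ^ k) × ZMod (p ^ k) × ZMod (p ^ k) × ZMod (p ^ k) //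
          QF q = 1} : ℚ) = (p : ℚ) ^ (3 * k) - (p : ℚ) ^ (3 * k - 2) := by
        exact_mod_cast hZ
      show (Nat.card {q : ZMod (p ^ k) × ZMod (p ^ k) × ZMod (p ^ k) × ZMod (p ^ k) //
          QF q = 1} : ℚ) = _
      rw [hQcast, Nat.primeFactors_prime_pow (by omega : k ≠ 0) hprime, Finset.prod_singleton]
      have hpQ : (p : ℚ) ≠ 0 := Nat.cast_ne_zero.mpr (Fact.out : p.Prime).ne_zero
      push_cast
      rw [← pow_mul, mul_comm k 3, mul_sub, mul_one, mul_one_div, div_eq_mul_inv,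
        ← pow_sub₀ _ hpQ (by omega : 2 ≤ 3 * k)]
  | zero =>
      intro _ hpos0
      exact absurd hpos0 (lt_irrefl 0)
  | one =>
      intro _ _
      haveI : NeZero 1 := ⟨one_ne_zero⟩
      show (Nat.card {q : ZMod 1 × ZMod 1 × ZMod 1 × ZMod 1 // QF q = 1} : ℚ) = _
      rw [natCard_eq_filter 1, Finset.filter_true_of_mem (fun q _ => Subsingleton.elim _ _)]
      simp [Nat.primeFactors_one]
  | coprime a b ha hb hco iha ihb =>
      intro hodd _
      have hodda : Odd a := (Nat.odd_mul.mp hodd).1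
      have hoddb : Odd b := (Nat.odd_mul.mp hodd).2
      haveI : NeZero a := ⟨by omega⟩
      haveI : NeZero b := ⟨by omega⟩
      show (Nat.card {q : ZMod (a * b) × ZMod (a * b) × ZMod (a * b) × ZMod (a * b) //
          QF q = 1} : ℚ) = _
      rw [card_sols_mul hco, Nat.cast_mul]
      have hia := iha hodda (by omega)
      have hib := ihb hoddb (by omega)
      rw [show (Nat.card {q : ZMod a × ZMod a × ZMod a × ZMod a // QF q = 1} : ℚ)
          = (a : ℚ) ^ 3 * ∏ p ∈ a.primeFactors, (1 - 1 / (p : ℚ) ^ 2) from hia,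
        show (Nat.card {q : ZMod b × ZMod b × ZMod b × ZMod b // QF q = 1} : ℚ)
          = (b : ℚ) ^ 3 * ∏ p ∈ b.primeFactors, (1 - 1 / (p : ℚ) ^ 2) from hib,
        Nat.primeFactors_mul (by omega : a ≠ 0) (by omega : b ≠ 0),
        Finset.prod_union (Nat.Coprime.disjoint_primeFactors hco)]
      push_cast
      ring
end

section
/- Let g ∈ H₍₁,₂,₂₎ and suppose N(g) is an even integer. Then there exist h, h′ ∈ H₍₁,₂,₂₎ with g = (1 + i)·h and g = h′·(1 + i). -/
open Quaternion

noncomputable section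

/-- Left factorization: explicit integer coefficient identity. -/
theorem left_factor_aux (a b c d a' b' c' d' : ℤ)
    (e1 : 2 * a' = a + b + c) (e2 : 2 * b' = b - a - d)
    (e3 : 2 * c' = c + d) (e4 : 2 * d' = d - c) :
    a • v₁ + b • v₂ + c • v₃ + d • v₄ =
      (1 + v₂) * (a' • v₁ + b' • v₂ + c' • v₃ + d' • v₄) := by
  have f1 : (a':ℝ) = ((a:ℝ) + b + c)/2 := by
    have := congrArg (Int.cast : ℤ → ℝ) e1; push_cast at this; linarith
  have f2 : (b':ℝ) = ((b:ℝ) - a - d)/2 := by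
    have := congrArg (Int.cast : ℤ → ℝ) e2; push_cast at this; linarith
  have f3 : (c':ℝ) = ((c:ℝ) + d)/2 := by
    have := congrArg (Int.cast : ℤ → ℝ) e3; push_cast at this; linarith
  have f4 : (d':ℝ) = ((d:ℝ) - c)/2 := by
    have := congrArg (Int.cast : ℤ → ℝ) e4; push_cast at this; linarith
  ext <;> simp [Quaternion.re_mul, Quaternion.imI_mul, Quaternion.imJ_mul, Quaternion.imK_mul, Quaternion.re_smul, f1, f2, f3, f4] <;> simp [v₁, v₂, v₃, v₄] <;> ring

/-- Right factorization: explicit integer coefficient identity. -/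
theorem right_factor_aux (a b c d a' b' c' d' : ℤ)
    (e1 : 2 * a' = a + b + d) (e2 : 2 * b' = b - a - c)
    (e3 : 2 * c' = c - d) (e4 : 2 * d' = c + d) :
    a • v₁ + b • v₂ + c • v₃ + d • v₄ =
      (a' • v₁ + b' • v₂ + c' • v₃ + d' • v₄) * (1 + v₂) := by
  have f1 : (a':ℝ) = ((a:ℝ) + b + d)/2 := by
    have := congrArg (Int.cast : ℤ → ℝ) e1; push_cast at this; linarith
  have f2 : (b':ℝ) = ((b:ℝ) - a - c)/2 := by
    have := congrArg (Int.cast : ℤ → ℝ) e2; push_cast at this; linarith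
  have f3 : (c':ℝ) = ((c:ℝ) - d)/2 := by
    have := congrArg (Int.cast : ℤ → ℝ) e3; push_cast at this; linarith
  have f4 : (d':ℝ) = ((c:ℝ) + d)/2 := by
    have := congrArg (Int.cast : ℤ → ℝ) e4; push_cast at this; linarith
  ext <;> simp [Quaternion.re_mul, Quaternion.imI_mul, Quaternion.imJ_mul, Quaternion.imK_mul, Quaternion.re_smul, f1, f2, f3, f4] <;> simp [v₁, v₂, v₃, v₄] <;> ring

/-- If `g ∈ H₍₁,₂,₂₎` has even norm, then `1 + i` divides `g` on the left and
on the right within `H₍₁,₂,₂₎`. -/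
theorem left_right_factor_one_add_i (g : ℍ[ℝ]) (hg : g ∈ H122)
    (n : ℤ) (hn : Even n) (hN : g * star g = (n : ℍ[ℝ])) :
    (∃ h ∈ H122, g = (1 + v₂) * h) ∧ (∃ h' ∈ H122, g = h' * (1 + v₂)) := by
  obtain ⟨a, b, c, d, rfl⟩ := hg
  -- the norm formula
  have hs : Real.sqrt 2 ^ 2 = 2 := Real.sq_sqrt (by norm_num)
  have hform : n = a^2 + b^2 + (a+b)*(c+d) + c^2 + d^2 + c*d := by
    have h1 := congrArg QuaternionAlgebra.re hN
    simp [Quaternion.re_mul, Quaternion.imI_mul, Quaternion.imJ_mul, Quaternion.imK_mul, Quaternion.re_smul] at h1; simp [v₁, v₂, v₃, v₄] at h1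
    have : (n:ℝ) = ((a^2 + b^2 + (a+b)*(c+d) + c^2 + d^2 + c*d : ℤ) : ℝ) := by
      push_cast
      linear_combination -h1 + ((c:ℝ)^2 + (d:ℝ)^2)/4 * hs
    exact_mod_cast this
  -- parity facts via ZMod 2
  have key : ∀ A B C D : ZMod 2,
      A^2 + B^2 + (A+B)*(C+D) + C^2 + D^2 + C*D = 0 → C + D = 0 ∧ A + B + C = 0 := by
    decide
  have hn2 : ((n : ℤ) : ZMod 2) = 0 :=
    (ZMod.intCast_zmod_eq_zero_iff_dvd n 2).2 hn.two_dvd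
  have hP : ((a : ZMod 2))^2 + (b:ZMod 2)^2 + ((a:ZMod 2)+(b:ZMod 2))*((c:ZMod 2)+(d:ZMod 2))
      + (c:ZMod 2)^2 + (d:ZMod 2)^2 + (c:ZMod 2)*(d:ZMod 2) = 0 := by
    have := congrArg (Int.cast : ℤ → ZMod 2) hform
    push_cast at this
    rw [hn2] at this
    linear_combination -this
  obtain ⟨hcd, habc⟩ := key a b c d hP
  have dvd_cd : (2:ℤ) ∣ c + d := by
    have : ((c + d : ℤ) : ZMod 2) = 0 := by push_cast; exact hcd
    exact (ZMod.intCast_zmod_eq_zero_iff_dvd _ 2).1 this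
  have dvd_abc : (2:ℤ) ∣ a + b + c := by
    have : ((a + b + c : ℤ) : ZMod 2) = 0 := by push_cast; exact habc
    exact (ZMod.intCast_zmod_eq_zero_iff_dvd _ 2).1 this
  obtain ⟨s, hsd⟩ := dvd_cd
  obtain ⟨t, htd⟩ := dvd_abc
  constructor
  · -- left factor
    refine ⟨(t) • v₁ + (t - a - s) • v₂ + (s) • v₃ + (d - s) • v₄,
      ⟨t, t - a - s, s, d - s, rfl⟩, ?_⟩
    exact left_factor_aux a b c d t (t - a - s) s (d - s)
      (by omega) (by omega) (by omega) (by omega)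
  · -- right factor
    refine ⟨(t - s + d) • v₁ + (t - a - c) • v₂ + (c - s) • v₃ + (s) • v₄,
      ⟨t - s + d, t - a - c, c - s, s, rfl⟩, ?_⟩
    exact right_factor_aux a b c d (t - s + d) (t - a - c) (c - s) s
      (by omega) (by omega) (by omega) (by omega)
end
end

section
/- For every g ∈ H₍₁,₂,₂₎ there is exactly one element m₀ of the set {0, 1, v₃, 1 + v₃} such that g − m₀ = h·(1 + i) for some h ∈ H₍₁,₂,₂₎; likewise there is exactly one element m₀ of {0, 1, v₃, 1 + v₃} such that g − m₀ = (1 + i)·h for some h ∈ H₍₁,₂,₂₎. -/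
open Quaternion

noncomputable section

def C (a b c d : ℤ) : ℍ[ℝ] := a • v₁ + b • v₂ + c • v₃ + d • v₄

lemma C_mem (a b c d : ℤ) : C a b c d ∈ H122 := ⟨a, b, c, d, rfl⟩
lemma C_zero : C 0 0 0 0 = 0 := by simp [C]
lemma C_one : C 1 0 0 0 = 1 := by simp [C, v₁]
lemma C_v₃ : C 0 0 1 0 = v₃ := by simp [C]
lemma C_one_v₃ : C 1 0 1 0 = 1 + v₃ := by simp [C, v₁]

lemma C_congr {a b c d a' b' c' d' : ℤ} (h1 : a = a') (h2 : b = b') (h3 : c = c')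
    (h4 : d = d') : C a b c d = C a' b' c' d' := by rw [h1, h2, h3, h4]

lemma C_def (a b c d : ℤ) :
    C a b c d = ⟨a + c/2 + d/2, b + c/2 + d/2, c * (Real.sqrt 2 / 2), d * (Real.sqrt 2 / 2)⟩ := by
  apply Quaternion.ext <;>
    simp [C] <;> simp [v₁, v₂, v₃, v₄, zsmul_eq_mul] <;> ring

lemma C_inj {a b c d a' b' c' d' : ℤ} (h : C a b c d = C a' b' c' d') :
    a = a' ∧ b = b' ∧ c = c' ∧ d = d' := by
  rw [C_def, C_def] at h; replace h := QuaternionAlgebra.mk.inj h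
  obtain ⟨h1, h2, h3, h4⟩ := h
  have hs : Real.sqrt 2 / 2 ≠ 0 := by positivity
  have hc : (c : ℝ) = c' := mul_right_cancel₀ hs h3
  have hd : (d : ℝ) = d' := mul_right_cancel₀ hs h4
  have hc' : c = c' := by exact_mod_cast hc
  have hd' : d = d' := by exact_mod_cast hd
  refine ⟨?_, ?_, hc', hd'⟩
  · have : (a : ℝ) = a' := by rw [hc, hd] at h1; linarith
    exact_mod_cast this
  · have : (b : ℝ) = b' := by rw [hc, hd] at h2; linarith
    exact_mod_cast this

lemma C_sub (a b c d a' b' c' d' : ℤ) :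
    C a b c d - C a' b' c' d' = C (a-a') (b-b') (c-c') (d-d') := by
  apply Quaternion.ext <;> simp only [Quaternion.re_sub, Quaternion.imI_sub, Quaternion.imJ_sub, Quaternion.imK_sub] <;> simp only [C_def] <;> push_cast <;> ring_nf

lemma C_mulR (x y z w : ℤ) :
    C x y z w * (1 + v₂) = C (x-y-w) (x+y+z) (z+w) (w-z) := by
  have h1 : (1 + v₂ : ℍ[ℝ]) = ⟨1,1,0,0⟩ := by
    apply Quaternion.ext <;> simp only [Quaternion.re_add, Quaternion.imI_add, Quaternion.imJ_add, Quaternion.imK_add, Quaternion.re_one, Quaternion.imI_one, Quaternion.imJ_one, Quaternion.imK_one] <;> simp [v₂]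
  apply Quaternion.ext <;> simp only [Quaternion.re_mul, Quaternion.imI_mul, Quaternion.imJ_mul, Quaternion.imK_mul] <;> simp only [C_def, h1] <;> push_cast <;> ring_nf

lemma C_mulL (x y z w : ℤ) :
    (1 + v₂) * C x y z w = C (x-y-z) (x+y+w) (z-w) (z+w) := by
  have h1 : (1 + v₂ : ℍ[ℝ]) = ⟨1,1,0,0⟩ := by
    apply Quaternion.ext <;> simp only [Quaternion.re_add, Quaternion.imI_add, Quaternion.imJ_add, Quaternion.imK_add, Quaternion.re_one, Quaternion.imI_one, Quaternion.imJ_one, Quaternion.imK_one] <;> simp [v₂]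
  apply Quaternion.ext <;> simp only [Quaternion.re_mul, Quaternion.imI_mul, Quaternion.imJ_mul, Quaternion.imK_mul] <;> simp only [C_def, h1] <;> push_cast <;> ring_nf

lemma iffR (a b c d : ℤ) :
    (∃ h ∈ H122, C a b c d = h * (1 + v₂)) ↔ (a+b+d) % 2 = 0 ∧ (c+d) % 2 = 0 := by
  constructor
  · rintro ⟨h, ⟨x, y, z, w, rfl⟩, he⟩
    replace he : C a b c d = C x y z w * (1 + v₂) := he
    rw [C_mulR] at he
    obtain ⟨e1, e2, e3, e4⟩ := C_inj he
    omega
  · rintro ⟨h1, h2⟩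
    refine ⟨C ((a+b+d)/2) ((b-a-c)/2) ((c-d)/2) ((c+d)/2), C_mem _ _ _ _, ?_⟩
    rw [C_mulR]
    exact C_congr (by omega) (by omega) (by omega) (by omega)

lemma iffL (a b c d : ℤ) :
    (∃ h ∈ H122, C a b c d = (1 + v₂) * h) ↔ (a+b+d) % 2 = 0 ∧ (c+d) % 2 = 0 := by
  constructor
  · rintro ⟨h, ⟨x, y, z, w, rfl⟩, he⟩
    replace he : C a b c d = (1 + v₂) * C x y z w := he
    rw [C_mulL] at he
    obtain ⟨e1, e2, e3, e4⟩ := C_inj he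
    omega
  · rintro ⟨h1, h2⟩
    refine ⟨C ((a+b+c)/2) (b - (d-c)/2 - (a+b+c)/2) ((c+d)/2) ((d-c)/2), C_mem _ _ _ _, ?_⟩
    rw [C_mulL]
    exact C_congr (by omega) (by omega) (by omega) (by omega)

lemma rep_cases {y : ℍ[ℝ]} (hy : y ∈ ({0, 1, v₃, 1 + v₃} : Set ℍ[ℝ])) :
    ∃ ε₁ ε₂ : ℤ, (ε₁ = 0 ∨ ε₁ = 1) ∧ (ε₂ = 0 ∨ ε₂ = 1) ∧ y = C ε₁ 0 ε₂ 0 := by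
  simp only [Set.mem_insert_iff, Set.mem_singleton_iff] at hy
  rcases hy with rfl | rfl | rfl | rfl
  · exact ⟨0, 0, Or.inl rfl, Or.inl rfl, C_zero.symm⟩
  · exact ⟨1, 0, Or.inr rfl, Or.inl rfl, C_one.symm⟩
  · exact ⟨0, 1, Or.inl rfl, Or.inr rfl, C_v₃.symm⟩
  · exact ⟨1, 1, Or.inr rfl, Or.inr rfl, C_one_v₃.symm⟩

lemma rep_mem (ε₁ ε₂ : ℤ) (h1 : ε₁ = 0 ∨ ε₁ = 1) (h2 : ε₂ = 0 ∨ ε₂ = 1) :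
    C ε₁ 0 ε₂ 0 ∈ ({0, 1, v₃, 1 + v₃} : Set ℍ[ℝ]) := by
  rcases h1 with rfl | rfl <;> rcases h2 with rfl | rfl <;>
    simp [C_zero, C_one, C_v₃, C_one_v₃]


/-- `{0, 1, v₃, 1 + v₃}` is a complete set of coset representatives of `H₍₁,₂,₂₎`
modulo `1 + i`, for `1 + i` viewed either as a right or as a left factor. -/
theorem coset_reps_mod_one_add_i (g : ℍ[ℝ]) (hg : g ∈ H122) :
    (∃! m₀ : ℍ[ℝ], m₀ ∈ ({0, 1, v₃, 1 + v₃} : Set ℍ[ℝ]) ∧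
      ∃ h ∈ H122, g - m₀ = h * (1 + v₂)) ∧
    (∃! m₀ : ℍ[ℝ], m₀ ∈ ({0, 1, v₃, 1 + v₃} : Set ℍ[ℝ]) ∧
      ∃ h ∈ H122, g - m₀ = (1 + v₂) * h) := by
  obtain ⟨a, b, c, d, rfl⟩ := hg
  have hC : a • v₁ + b • v₂ + c • v₃ + d • v₄ = C a b c d := rfl
  rw [hC]
  constructor
  · refine ⟨C ((a+b+d) % 2) 0 ((c+d) % 2) 0,
      ⟨rep_mem _ _ (by omega) (by omega), ?_⟩, ?_⟩
    · rw [C_sub]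
      exact (iffR _ _ _ _).mpr ⟨by omega, by omega⟩
    · rintro y ⟨hy, hcond⟩
      obtain ⟨ε₁, ε₂, h1, h2, rfl⟩ := rep_cases hy
      rw [C_sub] at hcond
      obtain ⟨p1, p2⟩ := (iffR _ _ _ _).mp hcond
      exact C_congr (by omega) rfl (by omega) rfl
  · refine ⟨C ((a+b+d) % 2) 0 ((c+d) % 2) 0,
      ⟨rep_mem _ _ (by omega) (by omega), ?_⟩, ?_⟩
    · rw [C_sub]
      exact (iffL _ _ _ _).mpr ⟨by omega, by omega⟩
    · rintro y ⟨hy, hcond⟩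
      obtain ⟨ε₁, ε₂, h1, h2, rfl⟩ := rep_cases hy
      rw [C_sub] at hcond
      obtain ⟨p1, p2⟩ := (iffL _ _ _ _).mp hcond
      exact C_congr (by omega) rfl (by omega) rfl
end
end

section
/- Let a be a nonnegative integer. For every quaternion q, there exists h ∈ H₍₁,₂,₂₎ with q = h · (2^a(1 + i)) if and only if there exists h′ ∈ H₍₁,₂,₂₎ with q = (2^a(1 + i)) · h′; that is, the left ideal, the right ideal, and the two-sided ideal of H₍₁,₂,₂₎ generated by 2^a(1 + i) coincide. -/
open Quaternion

noncomputable section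

lemma key (A B C D : ℤ) :
    ((A : ℍ[ℝ]) * v₁ + B * v₂ + C * v₃ + D * v₄) * (1 + v₂) =
      (1 + v₂) * (((A + C : ℤ) : ℍ[ℝ]) * v₁ + ((B + C : ℤ) : ℍ[ℝ]) * v₂
        + (D : ℍ[ℝ]) * v₃ + ((-C : ℤ) : ℍ[ℝ]) * v₄) := by
  have h1 : v₁.re = 1 ∧ v₁.imI = 0 ∧ v₁.imJ = 0 ∧ v₁.imK = 0 := ⟨rfl, rfl, rfl, rfl⟩
  have h2 : v₂.re = 0 ∧ v₂.imI = 1 ∧ v₂.imJ = 0 ∧ v₂.imK = 0 := ⟨rfl, rfl, rfl, rfl⟩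
  have h3 : v₃.re = 1/2 ∧ v₃.imI = 1/2 ∧ v₃.imJ = Real.sqrt 2 / 2 ∧ v₃.imK = 0 := ⟨rfl, rfl, rfl, rfl⟩
  have h4 : v₄.re = 1/2 ∧ v₄.imI = 1/2 ∧ v₄.imJ = 0 ∧ v₄.imK = Real.sqrt 2 / 2 := ⟨rfl, rfl, rfl, rfl⟩
  ext <;>
    simp [h1, h2, h3, h4, Quaternion.ext_iff, re_mul, imI_mul, imJ_mul, imK_mul] <;>
    ring

lemma comm2 (a : ℕ) (x : ℍ[ℝ]) : x * (2 : ℍ[ℝ]) ^ a = (2 : ℍ[ℝ]) ^ a * x :=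
  ((Commute.ofNat_right x 2).pow_right a).eq

lemma shift (a : ℕ) (x y z : ℍ[ℝ]) (hxy : x * y = y * z) :
    x * ((2 : ℍ[ℝ]) ^ a * y) = ((2 : ℍ[ℝ]) ^ a * y) * z := by
  rw [← mul_assoc, comm2 a x, mul_assoc, hxy, mul_assoc]

/-- For `a ≥ 0`, the left ideal and the right ideal of `H₍₁,₂,₂₎` generated by
`2^a(1 + i)` coincide (and hence agree with the two-sided ideal): a quaternion `q` is
a left multiple of `2^a(1 + i)` by an element of `H₍₁,₂,₂₎` iff it is a right multiple. -/
theorem left_ideal_eq_right_ideal_two_pow_one_add_i (a : ℕ) (q : ℍ[ℝ]) :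
    (∃ h ∈ H122, q = h * ((2 : ℍ[ℝ]) ^ a * (1 + v₂))) ↔
    (∃ h' ∈ H122, q = ((2 : ℍ[ℝ]) ^ a * (1 + v₂)) * h') := by
  constructor
  · rintro ⟨h, ⟨A, B, C, D, rfl⟩, rfl⟩
    refine ⟨((A + C : ℤ) : ℍ[ℝ]) * v₁ + ((B + C : ℤ) : ℍ[ℝ]) * v₂
        + (D : ℍ[ℝ]) * v₃ + ((-C : ℤ) : ℍ[ℝ]) * v₄, ⟨A + C, B + C, D, -C, ?_⟩, ?_⟩
    · simp [zsmul_eq_mul]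
    · have := key A B C D
      simp only [zsmul_eq_mul]
      exact shift a _ _ _ this
  · rintro ⟨h, ⟨A, B, C, D, rfl⟩, rfl⟩
    refine ⟨((A + D : ℤ) : ℍ[ℝ]) * v₁ + ((B + D : ℤ) : ℍ[ℝ]) * v₂
        + ((-D : ℤ) : ℍ[ℝ]) * v₃ + (C : ℍ[ℝ]) * v₄, ⟨A + D, B + D, -D, C, ?_⟩, ?_⟩
    · simp [zsmul_eq_mul]
    · have := key (A + D) (B + D) (-D) C
      simp only [add_neg_cancel_right, neg_neg] at this
      push_cast at this
      simp only [zsmul_eq_mul]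
      push_cast
      exact (shift a _ _ _ this).symm
end
end
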